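/- arXiv:0708.0437 — 6 statements merged into one kernel-verified Lean document; each statement's English description precedes it below -/
import Mathlib

section
/- For every nonnegative integer l, the empirical observability Gramian of a stable LTI system satisfies ‖W_o − W_oe(l)‖ ≤ ‖A^l‖² ‖W_o‖. -/
open scoped Matrix

noncomputable section

open scoped Matrix.Norms.L2Operator

/-- For a stable LTI system (`ρ(A) < 1`) with observability Gramian
`W_o = ∑_{i=0}^∞ (A^i)* C* C A^i` and empirical observability Gramian
`W_oe(l) = ∑_{i=0}^{l−1} (A^i)* C* C A^i`, one has `‖W_o − W_oe(l)‖ ≤ ‖A^l‖² ‖W_o‖`,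
where `‖·‖` is the operator norm induced by the Euclidean norm. -/
theorem lti_empirical_observability_gramian_error_bound
    (n p q : ℕ) (hn : 1 ≤ n) (hp : 1 ≤ p) (hq : 1 ≤ q)
    (A : Matrix (Fin n) (Fin n) ℂ) (B : Matrix (Fin n) (Fin p) ℂ)
    (C : Matrix (Fin q) (Fin n) ℂ)
    (hstab : spectralRadius ℂ A < 1) (l : ℕ) :
    ‖(∑' i : ℕ, (A ^ i)ᴴ * Cᴴ * C * A ^ i) - ∑ i ∈ Finset.range l, (A ^ i)ᴴ * Cᴴ * C * A ^ i‖
      ≤ ‖A ^ l‖ ^ 2 * ‖∑' i : ℕ, (A ^ i)ᴴ * Cᴴ * C * A ^ i‖ := by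
  set f : ℕ → Matrix (Fin n) (Fin n) ℂ := fun i => (A ^ i)ᴴ * Cᴴ * C * A ^ i with hf
  -- pick r with ρ(A) < r < 1
  obtain ⟨r, hρr, hr1⟩ := ENNReal.lt_iff_exists_nnreal_btwn.mp hstab
  have hr1' : (r : ℝ) < 1 := by exact_mod_cast hr1
  -- Gelfand's formula gives eventual geometric decay
  have hgel := spectrum.pow_nnnorm_pow_one_div_tendsto_nhds_spectralRadius A
  have hev : ∀ᶠ m : ℕ in Filter.atTop, (‖A ^ m‖₊ : ENNReal) ^ (1 / m : ℝ) < r :=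
    hgel.eventually_lt_const hρr
  have hdecay : ∀ᶠ m : ℕ in Filter.atTop, ‖A ^ m‖ ≤ (r : ℝ) ^ m := by
    filter_upwards [hev, Filter.eventually_ge_atTop 1] with m hm hm1
    have hm0 : (m : ℝ) ≠ 0 := by positivity
    have : ((‖A ^ m‖₊ : ENNReal) ^ (1 / m : ℝ)) ^ (m : ℝ) ≤ ((r : ENNReal)) ^ (m : ℝ) :=
      ENNReal.rpow_le_rpow hm.le (by positivity)
    rw [← ENNReal.rpow_mul, one_div, inv_mul_cancel₀ hm0, ENNReal.rpow_one,
      ENNReal.rpow_natCast, ← ENNReal.coe_pow, ENNReal.coe_le_coe] at this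
    calc ‖A ^ m‖ = ((‖A ^ m‖₊ : NNReal) : ℝ) := rfl
      _ ≤ ((r ^ m : NNReal) : ℝ) := by exact_mod_cast this
      _ = (r : ℝ) ^ m := by push_cast; ring
  -- summability of f
  have hsum : Summable f := by
    apply Summable.of_norm_bounded_eventually_nat (g := fun i => ‖C‖ ^ 2 * ((r : ℝ) ^ 2) ^ i)
    · exact (summable_geometric_of_lt_one (by positivity)
        (by nlinarith [r.coe_nonneg])).mul_left _
    · filter_upwards [hdecay] with i hi
      have h1 : ‖f i‖ ≤ ‖(A ^ i)ᴴ‖ * ‖Cᴴ‖ * ‖C‖ * ‖A ^ i‖ := by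
        calc ‖(A ^ i)ᴴ * Cᴴ * C * A ^ i‖ ≤ ‖(A ^ i)ᴴ * Cᴴ * C‖ * ‖A ^ i‖ :=
              Matrix.l2_opNorm_mul _ _
          _ ≤ ‖(A ^ i)ᴴ * Cᴴ‖ * ‖C‖ * ‖A ^ i‖ := by
              gcongr; exact Matrix.l2_opNorm_mul _ _
          _ ≤ ‖(A ^ i)ᴴ‖ * ‖Cᴴ‖ * ‖C‖ * ‖A ^ i‖ := by
              gcongr; exact Matrix.l2_opNorm_mul _ _
      rw [Matrix.l2_opNorm_conjTranspose, Matrix.l2_opNorm_conjTranspose] at h1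
      have hC : (0 : ℝ) ≤ ‖C‖ := norm_nonneg _
      have hAi : (0 : ℝ) ≤ ‖A ^ i‖ := norm_nonneg _
      calc ‖f i‖ ≤ ‖A ^ i‖ * ‖C‖ * ‖C‖ * ‖A ^ i‖ := h1
        _ ≤ (r : ℝ) ^ i * ‖C‖ * ‖C‖ * ((r : ℝ) ^ i) := by gcongr
        _ = ‖C‖ ^ 2 * ((r : ℝ) ^ 2) ^ i := by ring
  -- tail identity
  have htail : (∑' i : ℕ, f i) - ∑ i ∈ Finset.range l, f i = ∑' j : ℕ, f (j + l) := by
    rw [← Summable.sum_add_tsum_nat_add l hsum]; exact add_sub_cancel_left _ _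
  have hshift : ∀ j : ℕ, f (j + l) = (A ^ l)ᴴ * (f j * A ^ l) := by
    intro j
    simp only [hf, pow_add, Matrix.conjTranspose_mul]
    simp only [Matrix.mul_assoc]
  have htsum : (∑' j : ℕ, f (j + l)) = (A ^ l)ᴴ * ((∑' i : ℕ, f i) * A ^ l) := by
    rw [← hsum.tsum_mul_right (A ^ l), ← (hsum.mul_right (A ^ l)).tsum_mul_left ((A ^ l)ᴴ)]
    exact tsum_congr hshift
  rw [htail, htsum]
  calc ‖(A ^ l)ᴴ * ((∑' i : ℕ, f i) * A ^ l)‖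
      ≤ ‖(A ^ l)ᴴ‖ * ‖(∑' i : ℕ, f i) * A ^ l‖ := Matrix.l2_opNorm_mul _ _
    _ ≤ ‖(A ^ l)ᴴ‖ * (‖∑' i : ℕ, f i‖ * ‖A ^ l‖) := by
        gcongr; exact Matrix.l2_opNorm_mul _ _
    _ = ‖A ^ l‖ ^ 2 * ‖∑' i : ℕ, f i‖ := by
        rw [Matrix.l2_opNorm_conjTranspose]; ring
end
end

section
/- For every integer j and m = lT with l a nonnegative integer, the empirical controllability Gramian of the periodic system satisfies ‖W_c(j) − W_ce(j;m)‖ ≤ ‖F(j+T,j)^l‖² ‖W_c(j)‖. -/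
open scoped Matrix

noncomputable section

open scoped Matrix.Norms.L2Operator

/-- `transMatAux A d i = A(i+d-1) * ⋯ * A(i)`. -/
def transMatAux {n : ℕ} (A : ℤ → Matrix (Fin n) (Fin n) ℂ) : ℕ → ℤ → Matrix (Fin n) (Fin n) ℂ
  | 0, _ => 1
  | (d + 1), i => A (i + d) * transMatAux A d i

/-- The state transition matrix `F(j,i) = A(j-1) * A(j-2) * ⋯ * A(i)` for `j ≥ i`,
with `F(i,i) = 1`. -/
def stateTrans {n : ℕ} (A : ℤ → Matrix (Fin n) (Fin n) ℂ) (j i : ℤ) :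
    Matrix (Fin n) (Fin n) ℂ :=
  transMatAux A (j - i).toNat i

/-- Controllability Gramian at time `j`:
`W_c(j) = ∑_{i=-∞}^{j-1} F(j,i+1) B(i) B(i)* F(j,i+1)*`, parametrized by `i = j-1-k`, `k : ℕ`. -/
def Wc {n p : ℕ} (A : ℤ → Matrix (Fin n) (Fin n) ℂ) (B : ℤ → Matrix (Fin n) (Fin p) ℂ)
    (j : ℤ) : Matrix (Fin n) (Fin n) ℂ :=
  ∑' k : ℕ,
    stateTrans A j (j - k) * B (j - 1 - k) * (B (j - 1 - k))ᴴ * (stateTrans A j (j - k))ᴴ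

/-- Observability Gramian at time `j`:
`W_o(j) = ∑_{i=j}^{∞} F(i,j)* C(i)* C(i) F(i,j)`, parametrized by `i = j+k`, `k : ℕ`. -/
def Wo {n q : ℕ} (A : ℤ → Matrix (Fin n) (Fin n) ℂ) (C : ℤ → Matrix (Fin q) (Fin n) ℂ)
    (j : ℤ) : Matrix (Fin n) (Fin n) ℂ :=
  ∑' k : ℕ, (stateTrans A (j + k) j)ᴴ * (C (j + k))ᴴ * C (j + k) * stateTrans A (j + k) j

/-- Empirical controllability Gramian at time `j` over `m` steps:
`W_ce(j;m) = ∑_{i=j-m}^{j-1} F(j,i+1) B(i) B(i)* F(j,i+1)*`, parametrized by `i = j-1-k`. -/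
def Wce {n p : ℕ} (A : ℤ → Matrix (Fin n) (Fin n) ℂ) (B : ℤ → Matrix (Fin n) (Fin p) ℂ)
    (j : ℤ) (m : ℕ) : Matrix (Fin n) (Fin n) ℂ :=
  ∑ k ∈ Finset.range m,
    stateTrans A j (j - k) * B (j - 1 - k) * (B (j - 1 - k))ᴴ * (stateTrans A j (j - k))ᴴ

/-- Empirical observability Gramian at time `j` over `m` steps:
`W_oe(j;m) = ∑_{i=j}^{j+m-1} F(i,j)* C(i)* C(i) F(i,j)`, parametrized by `i = j+k`. -/
def Woe {n q : ℕ} (A : ℤ → Matrix (Fin n) (Fin n) ℂ) (C : ℤ → Matrix (Fin q) (Fin n) ℂ)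
    (j : ℤ) (m : ℕ) : Matrix (Fin n) (Fin n) ℂ :=
  ∑ k ∈ Finset.range m,
    (stateTrans A (j + k) j)ᴴ * (C (j + k))ᴴ * C (j + k) * stateTrans A (j + k) j

set_option maxHeartbeats 1000000

namespace Helpers

variable {n p : ℕ} {T : ℕ}

lemma per_shift {α : Sort*} {g : ℤ → α} (hg : ∀ k : ℤ, g (k + T) = g k) (l : ℕ) (k : ℤ) :
    g (k - l * T) = g k := by
  induction l with
  | zero => simp
  | succ l ih =>
      have h := hg (k - (l + 1 : ℕ) * T)
      rw [show (k - ((l + 1 : ℕ) : ℤ) * T + T) = k - l * T by push_cast; ring] at h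
      rw [← h, ih]

lemma tma_succ (A : ℤ → Matrix (Fin n) (Fin n) ℂ) (d : ℕ) (i : ℤ) :
    transMatAux A (d + 1) i = A (i + d) * transMatAux A d i := rfl

lemma tma_add (A : ℤ → Matrix (Fin n) (Fin n) ℂ) (d e : ℕ) (i : ℤ) :
    transMatAux A (d + e) i = transMatAux A d (i + e) * transMatAux A e i := by
  induction d with
  | zero => simp [transMatAux]
  | succ d ih =>
      have h1 : d + 1 + e = (d + e) + 1 := by omega
      rw [h1, tma_succ, tma_succ, ih, ← mul_assoc]
      congr 2
      push_cast; ring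

variable {A : ℤ → Matrix (Fin n) (Fin n) ℂ} (hA : ∀ k : ℤ, A (k + T) = A k)

include hA

lemma tma_shift (d : ℕ) (i : ℤ) : transMatAux A d (i - T) = transMatAux A d i := by
  induction d with
  | zero => rfl
  | succ d ih =>
      rw [tma_succ, tma_succ, ih]
      congr 1
      rw [show (i - (T : ℤ) + d) = (i + d) - 1 * T by push_cast; ring]
      exact per_shift hA 1 _

lemma tma_shift_mul (l : ℕ) (d : ℕ) (i : ℤ) :
    transMatAux A d (i - l * T) = transMatAux A d i := by
  induction l with
  | zero => simp
  | succ l ih =>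
      rw [show (i - ((l + 1 : ℕ) : ℤ) * T) = (i - l * T) - T by push_cast; ring,
        tma_shift hA, ih]

lemma tma_pow (l : ℕ) (j : ℤ) :
    transMatAux A (l * T) (j - l * T) = (transMatAux A T j) ^ l := by
  induction l with
  | zero => simp [transMatAux]
  | succ l ih =>
      have h1 : (l + 1) * T = T + l * T := by ring
      rw [h1, tma_add]
      have h2 : (j - ((l + 1 : ℕ) : ℤ) * T) + ((l * T : ℕ) : ℤ) = j - T := by push_cast; ring
      rw [h2, tma_shift hA]
      have h3 : (j - ((l + 1 : ℕ) : ℤ) * T) = (j - (l : ℤ) * T) - T := by push_cast; ring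
      rw [h3, tma_shift hA, ih, pow_succ']

omit hA in
lemma stateTrans_sub (j : ℤ) (k : ℕ) :
    stateTrans A j (j - k) = transMatAux A k (j - k) := by
  unfold stateTrans
  rw [show j - (j - (k : ℤ)) = (k : ℤ) by ring, Int.toNat_natCast]

omit hA in
lemma stateTrans_T (j : ℤ) : stateTrans A (j + T) j = transMatAux A T j := by
  unfold stateTrans
  rw [show (j + (T : ℤ) - j) = (T : ℤ) by ring, Int.toNat_natCast]

/-- Decomposition `F(j, j-k) = G1^(k/T) * F(j, j - k%T)` for periodic `A`. -/
lemma tma_divmod (j : ℤ) (k : ℕ) :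
    transMatAux A k (j - k) =
      (transMatAux A T j) ^ (k / T) * transMatAux A (k % T) (j - (k % T : ℕ)) := by
  set q := k / T with hq
  set r := k % T with hr
  have hk : q * T + r = k := by rw [hq, hr, mul_comm]; exact Nat.div_add_mod k T
  have hkz : (q : ℤ) * T + (r : ℤ) = (k : ℤ) := by exact_mod_cast hk
  calc transMatAux A k (j - k)
      = transMatAux A (q * T + r) (j - k) := by rw [hk]
    _ = transMatAux A (q * T) ((j - k) + r) * transMatAux A r (j - k) := tma_add A _ _ _
    _ = (transMatAux A T j) ^ q * transMatAux A r (j - (r : ℕ)) := by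
        have h2 : (j - (k : ℤ)) + (r : ℕ) = j - (q : ℤ) * T := by linear_combination hkz
        have h3 : (j - (k : ℤ)) = (j - (r : ℤ)) - (q : ℤ) * T := by linear_combination hkz
        rw [h2, h3]
        congr 1
        · have h4 := tma_pow hA q j
          exact h4
        · exact tma_shift_mul hA q r _

end Helpers

open Helpers

/-- For every integer `j` and `m = lT` with `l` a nonnegative integer,
`‖W_c(j) − W_ce(j;m)‖ ≤ ‖F(j+T,j)^l‖² ‖W_c(j)‖`, where `‖·‖` is the operator norm
induced by the Euclidean norm. -/
theorem periodic_empirical_controllability_gramian_error_bound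
    (n p q T : ℕ) (hn : 1 ≤ n) (hp : 1 ≤ p) (hq : 1 ≤ q) (hT : 1 ≤ T)
    (A : ℤ → Matrix (Fin n) (Fin n) ℂ) (B : ℤ → Matrix (Fin n) (Fin p) ℂ)
    (C : ℤ → Matrix (Fin q) (Fin n) ℂ)
    (hA : ∀ k : ℤ, A (k + T) = A k) (hB : ∀ k : ℤ, B (k + T) = B k)
    (hC : ∀ k : ℤ, C (k + T) = C k)
    (hstab : ∀ j : ℤ, spectralRadius ℂ (stateTrans A (j + T) j) < 1)
    (j : ℤ) (l : ℕ) :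
    ‖Wc A B j - Wce A B j (l * T)‖ ≤ ‖stateTrans A (j + T) j ^ l‖ ^ 2 * ‖Wc A B j‖ := by
  classical
  have hTpos : 0 < T := hT
  haveI : NeZero T := ⟨by omega⟩
  set G1 : Matrix (Fin n) (Fin n) ℂ := stateTrans A (j + T) j with hG1def
  have hG1 : G1 = transMatAux A T j := stateTrans_T j
  set f : ℕ → Matrix (Fin n) (Fin n) ℂ := fun k =>
    stateTrans A j (j - k) * B (j - 1 - k) * (B (j - 1 - k))ᴴ * (stateTrans A j (j - k))ᴴ
    with hfdef
  -- geometric decay of ‖G1^k‖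
  obtain ⟨r', hr1, hr2⟩ := exists_between (hstab j)
  have hr'top : r' ≠ ⊤ := (hr2.trans_le le_top).ne
  set r : NNReal := r'.toNNReal with hrdef
  have hrc : (r : ENNReal) = r' := ENNReal.coe_toNNReal hr'top
  have hrlt1 : r < 1 := by
    rw [← ENNReal.coe_lt_coe, hrc]; exact_mod_cast hr2
  have hev : ∀ᶠ k : ℕ in Filter.atTop, ‖G1 ^ k‖ ≤ (r : ℝ) ^ k := by
    have hg := spectrum.pow_nnnorm_pow_one_div_tendsto_nhds_spectralRadius G1
    have h1 := hg.eventually_lt_const hr1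
    filter_upwards [h1, Filter.eventually_ge_atTop 1] with k hk hk1
    have hkne : (k : ℝ) ≠ 0 := by positivity
    have hx : ((‖G1 ^ k‖₊ : ENNReal) ^ (1 / (k : ℝ))) ^ (k : ℝ) = (‖G1 ^ k‖₊ : ENNReal) := by
      rw [← ENNReal.rpow_mul, one_div, inv_mul_cancel₀ hkne, ENNReal.rpow_one]
    have hlt : (‖G1 ^ k‖₊ : ENNReal) < (r : ENNReal) ^ (k : ℝ) := by
      rw [← hx, hrc]
      exact ENNReal.rpow_lt_rpow hk (by positivity)
    rw [← ENNReal.coe_rpow_of_nonneg r (by positivity)] at hlt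
    have hnn : ‖G1 ^ k‖₊ ≤ r ^ (k : ℝ) := by exact_mod_cast hlt.le
    rw [show ((k : ℕ) : ℝ) = ((k : ℕ) : ℝ) from rfl, NNReal.rpow_natCast] at hnn
    calc ‖G1 ^ k‖ = ((‖G1 ^ k‖₊ : NNReal) : ℝ) := rfl
      _ ≤ ((r ^ k : NNReal) : ℝ) := by exact_mod_cast hnn
      _ = (r : ℝ) ^ k := by push_cast; ring
  have hc : Summable (fun s : ℕ => ‖G1 ^ s‖ ^ 2) := by
    apply Summable.of_norm_bounded_eventually_nat (g := fun s => ((r : ℝ) ^ 2) ^ s)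
    · exact summable_geometric_of_lt_one (by positivity) (by
        have : (r : ℝ) < 1 := hrlt1
        nlinarith [r.coe_nonneg])
    · filter_upwards [hev] with s hs
      have h0 : (0 : ℝ) ≤ ‖G1 ^ s‖ := norm_nonneg _
      rw [Real.norm_eq_abs, abs_of_nonneg (by positivity)]
      calc ‖G1 ^ s‖ ^ 2 ≤ ((r : ℝ) ^ s) ^ 2 := by nlinarith
        _ = ((r : ℝ) ^ 2) ^ s := by ring
  -- the residue bound
  set m : ℕ → ℝ := fun s => (‖transMatAux A s (j - (s : ℕ))‖ * ‖B (j - 1 - s)‖) ^ 2 with hmdef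
  have hm0 : ∀ s, 0 ≤ m s := fun s => sq_nonneg _
  -- summability of f
  have hbound : ∀ k : ℕ, ‖f k‖ ≤ ‖G1 ^ (k / T)‖ ^ 2 * m (k % T) := by
    intro k
    have hS : stateTrans A j (j - k) = G1 ^ (k / T) * transMatAux A (k % T) (j - (k % T : ℕ)) := by
      rw [stateTrans_sub, tma_divmod hA, hG1]
    have hBk : B (j - 1 - k) = B (j - 1 - (k % T : ℕ)) := by
      have hk : (k / T) * T + (k % T) = k := by rw [mul_comm]; exact Nat.div_add_mod k T
      have hkz : ((k / T : ℕ) : ℤ) * T + ((k % T : ℕ) : ℤ) = (k : ℤ) := by exact_mod_cast hk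
      have h6 : (j - 1 - (k : ℤ)) = (j - 1 - ((k % T : ℕ) : ℤ)) - ((k / T : ℕ) : ℤ) * T := by
        linear_combination hkz
      rw [h6, per_shift hB]
    set S := stateTrans A j (j - (k : ℤ))
    set Bk := B (j - 1 - (k : ℤ))
    have h1 : ‖f k‖ ≤ ‖S‖ * ‖Bk‖ * ‖Bkᴴ‖ * ‖Sᴴ‖ := by
      calc ‖S * Bk * Bkᴴ * Sᴴ‖ ≤ ‖S * Bk * Bkᴴ‖ * ‖Sᴴ‖ := Matrix.l2_opNorm_mul _ _
        _ ≤ ‖S * Bk‖ * ‖Bkᴴ‖ * ‖Sᴴ‖ :=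
            mul_le_mul_of_nonneg_right (Matrix.l2_opNorm_mul _ _) (norm_nonneg _)
        _ ≤ ‖S‖ * ‖Bk‖ * ‖Bkᴴ‖ * ‖Sᴴ‖ :=
            mul_le_mul_of_nonneg_right (mul_le_mul_of_nonneg_right
              (Matrix.l2_opNorm_mul _ _) (norm_nonneg _)) (norm_nonneg _)
    rw [Matrix.l2_opNorm_conjTranspose, Matrix.l2_opNorm_conjTranspose] at h1
    have hSle : ‖S‖ ≤ ‖G1 ^ (k / T)‖ * ‖transMatAux A (k % T) (j - (k % T : ℕ))‖ := by
      rw [hS]; exact Matrix.l2_opNorm_mul _ _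
    have hBkeq : ‖Bk‖ = ‖B (j - 1 - (k % T : ℕ))‖ := by rw [hBk]
    have hfin : ‖S‖ * ‖Bk‖ * ‖Bk‖ * ‖S‖ ≤ ‖G1 ^ (k / T)‖ ^ 2 * m (k % T) := by
      rw [hmdef]
      simp only []
      rw [hBkeq]
      have hSS : ‖S‖ * ‖S‖ ≤
          (‖G1 ^ (k / T)‖ * ‖transMatAux A (k % T) (j - (k % T : ℕ))‖) *
            (‖G1 ^ (k / T)‖ * ‖transMatAux A (k % T) (j - (k % T : ℕ))‖) :=
        mul_le_mul hSle hSle (norm_nonneg _) (by positivity)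
      nlinarith [mul_le_mul_of_nonneg_right hSS
        (mul_nonneg (norm_nonneg (B (j - 1 - ((k % T : ℕ) : ℤ))))
          (norm_nonneg (B (j - 1 - ((k % T : ℕ) : ℤ)))))]
    exact h1.trans hfin
  have hsummaj : Summable (fun k : ℕ => ‖G1 ^ (k / T)‖ ^ 2 * m (k % T)) := by
    have hprod : Summable (fun x : ℕ × Fin T => ‖G1 ^ x.1‖ ^ 2 * m (x.2 : ℕ)) := by
      exact Summable.mul_of_nonneg (f := fun s : ℕ => ‖G1 ^ s‖ ^ 2)
        (g := fun x : Fin T => m (x : ℕ)) hc Summable.of_finite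
        (fun s => sq_nonneg _) (fun x => hm0 _)
    have := ((Nat.divModEquiv T).summable_iff
      (f := fun x : ℕ × Fin T => ‖G1 ^ x.1‖ ^ 2 * m (x.2 : ℕ))).mpr hprod
    have hfun : (fun x : ℕ × Fin T => ‖G1 ^ x.1‖ ^ 2 * m (x.2 : ℕ)) ∘ (Nat.divModEquiv T)
        = fun k : ℕ => ‖G1 ^ (k / T)‖ ^ 2 * m (k % T) := by
      funext k
      simp [Nat.divModEquiv, Fin.val_natCast]
    rwa [hfun] at this
  have hsumf : Summable f :=
    Summable.of_norm_bounded hsummaj hbound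
  -- the term shift identity
  have hterm : ∀ k : ℕ, f (k + l * T) = (G1 ^ l) * f k * (G1 ^ l)ᴴ := by
    intro k
    have hS : stateTrans A j (j - (k + l * T : ℕ)) = G1 ^ l * stateTrans A j (j - k) := by
      rw [stateTrans_sub, show k + l * T = l * T + k by ring, tma_add]
      have h2 : (j - ((l * T + k : ℕ) : ℤ)) + (k : ℕ) = j - ((l * T : ℕ) : ℤ) := by push_cast; ring
      rw [h2]
      have h4 : ((l * T : ℕ) : ℤ) = (l : ℤ) * T := by push_cast; ring
      have h3 : transMatAux A (l * T) (j - ((l * T : ℕ) : ℤ)) = G1 ^ l := by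
        rw [h4, tma_pow hA, hG1]
      rw [h3]
      congr 1
      have h5 : (j - ((l * T + k : ℕ) : ℤ)) = (j - (k : ℤ)) - (l : ℤ) * T := by push_cast; ring
      rw [h5, tma_shift_mul hA, stateTrans_sub]
    have hBk : B (j - 1 - (k + l * T : ℕ)) = B (j - 1 - k) := by
      have h5 : (j - 1 - ((k + l * T : ℕ) : ℤ)) = (j - 1 - (k : ℤ)) - (l : ℤ) * T := by
        push_cast; ring
      rw [h5, per_shift hB]
    show stateTrans A j (j - (k + l * T : ℕ)) * B (j - 1 - (k + l * T : ℕ)) *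
        (B (j - 1 - (k + l * T : ℕ)))ᴴ * (stateTrans A j (j - (k + l * T : ℕ)))ᴴ = _
    rw [hS, hBk]
    simp only [hfdef]
    simp only [Matrix.conjTranspose_mul, ← Matrix.mul_assoc]
  -- tail identity
  have htail : HasSum (fun k : ℕ => f (k + l * T)) ((G1 ^ l) * Wc A B j * (G1 ^ l)ᴴ) := by
    have h := (hsumf.hasSum.mul_left (G1 ^ l)).mul_right ((G1 ^ l)ᴴ)
    have : Wc A B j = ∑' k, f k := rfl
    rw [this]
    simpa only [← hterm] using h
  have hkey : Wc A B j - Wce A B j (l * T) = (G1 ^ l) * Wc A B j * (G1 ^ l)ᴴ := by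
    have h0 := Summable.sum_add_tsum_nat_add (f := f) (l * T) hsumf
    have hWce : Wce A B j (l * T) = ∑ k ∈ Finset.range (l * T), f k := rfl
    have hWc : Wc A B j = ∑' k, f k := rfl
    have h1 : Wc A B j - Wce A B j (l * T) = ∑' i : ℕ, f (i + l * T) := by
      rw [hWce, hWc, ← h0]; abel
    rw [h1, htail.tsum_eq]
  rw [hkey]
  calc ‖G1 ^ l * Wc A B j * (G1 ^ l)ᴴ‖
      ≤ ‖G1 ^ l * Wc A B j‖ * ‖(G1 ^ l)ᴴ‖ := Matrix.l2_opNorm_mul _ _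
    _ ≤ ‖G1 ^ l‖ * ‖Wc A B j‖ * ‖(G1 ^ l)ᴴ‖ :=
        mul_le_mul_of_nonneg_right (Matrix.l2_opNorm_mul _ _) (norm_nonneg _)
    _ = ‖G1 ^ l‖ ^ 2 * ‖Wc A B j‖ := by
        rw [Matrix.l2_opNorm_conjTranspose]; ring
end
end

section
/- For every integer j and m = lT with l a nonnegative integer, the empirical observability Gramian of the periodic system satisfies ‖W_o(j) − W_oe(j;m)‖ ≤ ‖F(j+T,j)^l‖² ‖W_o(j)‖. -/
open scoped Matrix

noncomputable section

open scoped Matrix.Norms.L2Operator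

/- ### Auxiliary lemmas -/

section Aux

variable {n : ℕ}

lemma transMatAux_add (A : ℤ → Matrix (Fin n) (Fin n) ℂ) (d e : ℕ) (a : ℤ) :
    transMatAux A (d + e) a = transMatAux A d (a + e) * transMatAux A e a := by
  induction d with
  | zero => simp [transMatAux]
  | succ d ih =>
      have h1 : d + 1 + e = (d + e) + 1 := by ring
      rw [h1]
      simp only [transMatAux]
      rw [ih, ← Matrix.mul_assoc]
      have h2 : a + ((d + e : ℕ) : ℤ) = a + (e : ℤ) + (d : ℤ) := by push_cast; ring
      rw [h2]

lemma periodic_mul {α : Type*} (f : ℤ → α) (T : ℕ) (hf : ∀ k : ℤ, f (k + T) = f k)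
    (x : ℤ) (e : ℕ) : f (x + ((e * T : ℕ) : ℤ)) = f x := by
  induction e with
  | zero => simp
  | succ e ih =>
      have h : (x + (((e + 1) * T : ℕ) : ℤ)) = (x + ((e * T : ℕ) : ℤ)) + T := by
        push_cast; ring
      rw [h, hf, ih]

lemma transMatAux_shift (A : ℤ → Matrix (Fin n) (Fin n) ℂ) (T : ℕ)
    (hA : ∀ k : ℤ, A (k + T) = A k) (d e : ℕ) (a : ℤ) :
    transMatAux A d (a + ((e * T : ℕ) : ℤ)) = transMatAux A d a := by
  induction d with
  | zero => rfl
  | succ d ih =>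
      simp only [transMatAux]
      rw [ih]
      congr 1
      have h : a + ((e * T : ℕ) : ℤ) + (d : ℤ) = (a + (d : ℤ)) + ((e * T : ℕ) : ℤ) := by
        push_cast; ring
      rw [h, periodic_mul A T hA]

lemma transMatAux_pow (A : ℤ → Matrix (Fin n) (Fin n) ℂ) (T : ℕ)
    (hA : ∀ k : ℤ, A (k + T) = A k) (a : ℤ) (e : ℕ) :
    transMatAux A (e * T) a = (transMatAux A T a) ^ e := by
  induction e with
  | zero => simp [transMatAux, Nat.zero_mul]
  | succ e ih =>
      have h : (e + 1) * T = T + e * T := by ring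
      rw [h, transMatAux_add, transMatAux_shift A T hA, ih, pow_succ']

lemma stateTrans_natCast (A : ℤ → Matrix (Fin n) (Fin n) ℂ) (j : ℤ) (k : ℕ) :
    stateTrans A (j + (k : ℤ)) j = transMatAux A k j := by
  simp [stateTrans]

end Aux

/-- For every integer `j` and `m = lT` with `l` a nonnegative integer,
`‖W_o(j) − W_oe(j;m)‖ ≤ ‖F(j+T,j)^l‖² ‖W_o(j)‖`, where `‖·‖` is the operator norm
induced by the Euclidean norm. -/
theorem periodic_empirical_observability_gramian_error_bound
    (n p q T : ℕ) (hn : 1 ≤ n) (hp : 1 ≤ p) (hq : 1 ≤ q) (hT : 1 ≤ T)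
    (A : ℤ → Matrix (Fin n) (Fin n) ℂ) (B : ℤ → Matrix (Fin n) (Fin p) ℂ)
    (C : ℤ → Matrix (Fin q) (Fin n) ℂ)
    (hA : ∀ k : ℤ, A (k + T) = A k) (hB : ∀ k : ℤ, B (k + T) = B k)
    (hC : ∀ k : ℤ, C (k + T) = C k)
    (hstab : ∀ j : ℤ, spectralRadius ℂ (stateTrans A (j + T) j) < 1)
    (j : ℤ) (l : ℕ) :
    ‖Wo A C j - Woe A C j (l * T)‖ ≤ ‖stateTrans A (j + T) j ^ l‖ ^ 2 * ‖Wo A C j‖ := by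
  classical
  have hTpos : 0 < T := hT
  set P : Matrix (Fin n) (Fin n) ℂ := stateTrans A (j + T) j with hPset
  have hPdef : P = transMatAux A T j := stateTrans_natCast A j T
  set G : ℕ → Matrix (Fin n) (Fin n) ℂ := fun k =>
    (stateTrans A (j + (k : ℤ)) j)ᴴ * (C (j + (k : ℤ)))ᴴ * C (j + (k : ℤ)) *
      stateTrans A (j + (k : ℤ)) j with hGdef
  -- obtain `m₀ ≥ 1` with `‖P ^ m₀‖ < 1` from Gelfand's formula
  have hρ : spectralRadius ℂ P < 1 := hstab j
  have hgel := spectrum.pow_nnnorm_pow_one_div_tendsto_nhds_spectralRadius P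
  obtain ⟨m₀, hm₀lt, hm₀pos⟩ :=
    ((hgel.eventually_lt_const hρ).and (Filter.eventually_ge_atTop 1)).exists
  have hm₀ : 0 < m₀ := hm₀pos
  have hs1 : ‖P ^ m₀‖ < 1 := by
    by_contra hcon
    push_neg at hcon
    have h1 : (1 : ENNReal) ≤ ((‖P ^ m₀‖₊ : NNReal) : ENNReal) := by
      exact_mod_cast hcon
    have h2 : (1 : ENNReal) ≤ ((‖P ^ m₀‖₊ : NNReal) : ENNReal) ^ (1 / (m₀ : ℝ)) := by
      calc (1 : ENNReal) = (1 : ENNReal) ^ (1 / (m₀ : ℝ)) := (ENNReal.one_rpow _).symm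
        _ ≤ _ := ENNReal.rpow_le_rpow h1 (by positivity)
    exact absurd (h2.trans_lt hm₀lt) (lt_irrefl _)
  set s : ℝ := ‖P ^ m₀‖ with hsdef
  have hs0 : 0 ≤ s := norm_nonneg _
  -- bound for powers of P
  have hne : (Finset.range m₀).Nonempty := Finset.nonempty_range_iff.mpr hm₀.ne'
  set c : ℝ := (Finset.range m₀).sup' hne (fun i => ‖P ^ i‖) with hcdef
  have hc : ∀ i < m₀, ‖P ^ i‖ ≤ c := by
    intro i hi
    rw [hcdef]
    exact Finset.le_sup' (fun i : ℕ => ‖P ^ i‖) (Finset.mem_range.mpr hi)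
  have hc0 : 0 ≤ c := le_trans (norm_nonneg _) (hc 0 hm₀)
  have hpow : ∀ m : ℕ, ‖P ^ m‖ ≤ c * s ^ (m / m₀) := by
    intro m
    rcases Nat.eq_zero_or_pos (m / m₀) with he | he
    · rw [he, pow_zero, mul_one]
      have hlt : m < m₀ := by
        by_contra hge
        push_neg at hge
        exact absurd (Nat.div_pos hge hm₀) (by omega)
      exact hc m hlt
    · have hdecomp : m = m₀ * (m / m₀) + m % m₀ := (Nat.div_add_mod m m₀).symm
      calc ‖P ^ m‖ = ‖(P ^ m₀) ^ (m / m₀) * P ^ (m % m₀)‖ := by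
            rw [← pow_mul, ← pow_add, ← hdecomp]
        _ ≤ ‖(P ^ m₀) ^ (m / m₀)‖ * ‖P ^ (m % m₀)‖ := Matrix.l2_opNorm_mul _ _
        _ ≤ s ^ (m / m₀) * c := by
            exact mul_le_mul (norm_pow_le' _ he) (hc _ (Nat.mod_lt _ hm₀)) (norm_nonneg _)
              (pow_nonneg hs0 _)
        _ = c * s ^ (m / m₀) := mul_comm _ _
  -- bounds over one period
  have hneT : (Finset.range T).Nonempty := Finset.nonempty_range_iff.mpr hTpos.ne'
  set a0 : ℝ := (Finset.range T).sup' hneT (fun r => ‖transMatAux A r j‖) with ha0def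
  have ha : ∀ r < T, ‖transMatAux A r j‖ ≤ a0 := by
    intro r hr
    rw [ha0def]
    exact Finset.le_sup' (fun r : ℕ => ‖transMatAux A r j‖) (Finset.mem_range.mpr hr)
  have ha0 : 0 ≤ a0 := le_trans (norm_nonneg _) (ha 0 hTpos)
  set c0 : ℝ := (Finset.range T).sup' hneT (fun r => ‖C (j + (r : ℤ))‖) with hc0def
  have hcC : ∀ r < T, ‖C (j + (r : ℤ))‖ ≤ c0 := by
    intro r hr
    rw [hc0def]
    exact Finset.le_sup' (fun r : ℕ => ‖C (j + (r : ℤ))‖) (Finset.mem_range.mpr hr)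
  have hc00 : 0 ≤ c0 := le_trans (norm_nonneg _) (hcC 0 hTpos)
  set M : ℕ := T * m₀ with hMdef
  have hMpos : 0 < M := Nat.mul_pos hTpos hm₀
  -- bound for the transition matrices
  have hF : ∀ k : ℕ, ‖transMatAux A k j‖ ≤ a0 * (c * s ^ (k / M)) := by
    intro k
    have hk : k = k % T + (k / T) * T := (Nat.mod_add_div' k T).symm
    have step : ‖transMatAux A k j‖ ≤
        ‖transMatAux A (k % T) (j + (((k / T) * T : ℕ) : ℤ))‖ *
          ‖transMatAux A ((k / T) * T) j‖ := by
      conv_lhs => rw [hk]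
      rw [transMatAux_add]
      exact Matrix.l2_opNorm_mul _ _
    have h1 : transMatAux A (k % T) (j + (((k / T) * T : ℕ) : ℤ)) = transMatAux A (k % T) j :=
      transMatAux_shift A T hA _ _ _
    have h2 : transMatAux A ((k / T) * T) j = P ^ (k / T) := by
      rw [transMatAux_pow A T hA, ← hPdef]
    rw [h1, h2] at step
    refine step.trans ?_
    have h3 := hpow (k / T)
    rw [Nat.div_div_eq_div_mul] at h3
    exact mul_le_mul (ha _ (Nat.mod_lt _ hTpos)) h3 (norm_nonneg _) ha0
  -- bound for C
  have hCb : ∀ k : ℕ, ‖C (j + (k : ℤ))‖ ≤ c0 := by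
    intro k
    have hk : (j + (k : ℤ)) = (j + ((k % T : ℕ) : ℤ)) + (((k / T) * T : ℕ) : ℤ) := by
      have h1 : (k % T + k / T * T : ℕ) = k := Nat.mod_add_div' k T
      rw [add_assoc, ← Nat.cast_add, h1]
    rw [hk, periodic_mul C T hC]
    exact hcC _ (Nat.mod_lt _ hTpos)
  -- summability of the geometric bound
  have hu1 : s ^ 2 < 1 := pow_lt_one₀ hs0 hs1 two_ne_zero
  haveI : NeZero M := ⟨hMpos.ne'⟩
  have hgeo : Summable (fun k : ℕ => (c0 * (a0 * c)) ^ 2 * (s ^ 2) ^ (k / M)) := by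
    have hbase : Summable (fun i : ℕ => (s ^ 2) ^ i) :=
      summable_geometric_of_lt_one (by positivity) hu1
    have hprod : Summable (fun pr : ℕ × Fin M => (s ^ 2) ^ pr.1) := by
      refine (summable_prod_of_nonneg (fun pr => by positivity)).mpr ⟨fun x => ?_, ?_⟩
      · exact summable_of_finite_support (Set.toFinite _)
      · have : (fun x : ℕ => ∑' _ : Fin M, (s ^ 2) ^ x) =
            fun x : ℕ => (M : ℝ) * (s ^ 2) ^ x := by
          funext x
          rw [tsum_fintype]
          simp [Finset.sum_const, Fintype.card_fin, nsmul_eq_mul]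
        rw [this]
        exact hbase.mul_left _
    have hcomp : Summable ((fun pr : ℕ × Fin M => (s ^ 2) ^ pr.1) ∘ (Nat.divModEquiv M)) :=
      ((Nat.divModEquiv M).summable_iff).mpr hprod
    have hdiv : Summable (fun k : ℕ => (s ^ 2) ^ (k / M)) := by
      simpa [Function.comp_def, Nat.divModEquiv] using hcomp
    exact hdiv.mul_left _
  -- norm bound on G
  have hGbound : ∀ k : ℕ, ‖G k‖ ≤ (c0 * (a0 * c)) ^ 2 * (s ^ 2) ^ (k / M) := by
    intro k
    have hFk : stateTrans A (j + (k : ℤ)) j = transMatAux A k j := stateTrans_natCast A j k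
    set F := transMatAux A k j with hFdef
    set Ck := C (j + (k : ℤ)) with hCkdef
    have h1 : ‖G k‖ ≤ ‖F‖ * ‖Ck‖ * ‖Ck‖ * ‖F‖ := by
      have e1 : G k = Fᴴ * Ckᴴ * Ck * F := by rw [hGdef]; simp only [hFk]; rfl
      rw [e1]
      calc ‖Fᴴ * Ckᴴ * Ck * F‖ ≤ ‖Fᴴ * Ckᴴ * Ck‖ * ‖F‖ := Matrix.l2_opNorm_mul _ _
        _ ≤ (‖Fᴴ * Ckᴴ‖ * ‖Ck‖) * ‖F‖ :=
            mul_le_mul_of_nonneg_right (Matrix.l2_opNorm_mul _ _) (norm_nonneg _)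
        _ ≤ ((‖Fᴴ‖ * ‖Ckᴴ‖) * ‖Ck‖) * ‖F‖ := by
            apply mul_le_mul_of_nonneg_right _ (norm_nonneg _)
            exact mul_le_mul_of_nonneg_right (Matrix.l2_opNorm_mul _ _) (norm_nonneg _)
        _ = ‖F‖ * ‖Ck‖ * ‖Ck‖ * ‖F‖ := by
            rw [Matrix.l2_opNorm_conjTranspose, Matrix.l2_opNorm_conjTranspose]
    have h2 : ‖F‖ ≤ a0 * (c * s ^ (k / M)) := hF k
    have h3 : ‖Ck‖ ≤ c0 := hCb k
    have h4 : ‖F‖ * ‖Ck‖ * ‖Ck‖ * ‖F‖ ≤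
        (a0 * (c * s ^ (k / M))) * c0 * c0 * (a0 * (c * s ^ (k / M))) := by
      have hd : (0:ℝ) ≤ s ^ (k / M) := pow_nonneg hs0 _
      have hA0 : (0:ℝ) ≤ a0 * (c * s ^ (k / M)) := mul_nonneg ha0 (mul_nonneg hc0 hd)
      exact mul_le_mul
        (mul_le_mul (mul_le_mul h2 h3 (norm_nonneg _) hA0) h3 (norm_nonneg _)
          (mul_nonneg hA0 hc00))
        h2 (norm_nonneg _) (mul_nonneg (mul_nonneg hA0 hc00) hc00)
    have h5 : (a0 * (c * s ^ (k / M))) * c0 * c0 * (a0 * (c * s ^ (k / M))) =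
        (c0 * (a0 * c)) ^ 2 * (s ^ 2) ^ (k / M) := by
      have hp2 : (s ^ 2) ^ (k / M) = (s ^ (k / M)) ^ 2 := by
        rw [← pow_mul, ← pow_mul, Nat.mul_comm]
      rw [hp2]; ring
    calc ‖G k‖ ≤ ‖F‖ * ‖Ck‖ * ‖Ck‖ * ‖F‖ := h1
      _ ≤ (a0 * (c * s ^ (k / M))) * c0 * c0 * (a0 * (c * s ^ (k / M))) := h4
      _ = (c0 * (a0 * c)) ^ 2 * (s ^ 2) ^ (k / M) := h5
  haveI : CompleteSpace (Matrix (Fin n) (Fin n) ℂ) := by infer_instance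
  have hGsum : Summable G := Summable.of_norm_bounded hgeo hGbound
  -- the tail identity
  set X : Matrix (Fin n) (Fin n) ℂ := P ^ l with hXdef
  have htail : ∀ i : ℕ, G (i + l * T) = Xᴴ * G i * X := by
    intro i
    have e1 : transMatAux A (i + l * T) j = transMatAux A i j * X := by
      rw [transMatAux_add, transMatAux_shift A T hA, transMatAux_pow A T hA, ← hPdef]
    have e2 : C (j + ((i + l * T : ℕ) : ℤ)) = C (j + (i : ℤ)) := by
      have h : (j + ((i + l * T : ℕ) : ℤ)) = (j + (i : ℤ)) + ((l * T : ℕ) : ℤ) := by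
        push_cast; ring
      rw [h, periodic_mul C T hC]
    simp only [hGdef, stateTrans_natCast, e2, e1, Matrix.conjTranspose_mul, Matrix.mul_assoc]
  -- split the sum
  have hsplit := Summable.sum_add_tsum_nat_add (f := G) (l * T) hGsum
  have hWo : Wo A C j = ∑' k, G k := by simp only [Wo, hGdef]
  have hWoe : Woe A C j (l * T) = ∑ k ∈ Finset.range (l * T), G k := by
    simp only [Woe, hGdef]
  have hdiff : Wo A C j - Woe A C j (l * T) = ∑' i, G (i + l * T) := by
    rw [hWo, hWoe, ← hsplit, add_sub_cancel_left]
  have hXsum : (∑' i, G (i + l * T)) = Xᴴ * Wo A C j * X := by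
    have hGt : Summable (fun i => G i * X) := hGsum.mul_right X
    calc (∑' i, G (i + l * T)) = ∑' i, Xᴴ * (G i * X) := by
          simp only [htail, Matrix.mul_assoc]
      _ = Xᴴ * ∑' i, (G i * X) := Summable.tsum_mul_left _ hGt
      _ = Xᴴ * ((∑' i, G i) * X) := by rw [hGsum.tsum_mul_right]
      _ = Xᴴ * Wo A C j * X := by rw [hWo, Matrix.mul_assoc]
  rw [hdiff, hXsum]
  calc ‖Xᴴ * Wo A C j * X‖ ≤ ‖Xᴴ * Wo A C j‖ * ‖X‖ := Matrix.l2_opNorm_mul _ _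
    _ ≤ (‖Xᴴ‖ * ‖Wo A C j‖) * ‖X‖ :=
        mul_le_mul_of_nonneg_right (Matrix.l2_opNorm_mul _ _) (norm_nonneg _)
    _ = ‖X‖ ^ 2 * ‖Wo A C j‖ := by rw [Matrix.l2_opNorm_conjTranspose]; ring
end
end

section
/- Balanced truncation by the method of snapshots exactly balances the empirical Gramians: with Φ = X V Σ^{−1/2} and Ψ = Y U Σ^{−1/2} one has Ψ* Φ = I_a, Ψ* (X X*) Ψ = Σ, and Φ* (Y Y*) Φ = Σ. In particular, when a = n, Φ is invertible with inverse Ψ*, and the transformed controllability Gramian Ψ* (X X*) Ψ and transformed observability Gramian Φ* (Y Y*) Φ are both equal to the diagonal matrix Σ of Hankel singular values. -/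
open scoped Matrix

noncomputable section

/-- Balanced truncation by the method of snapshots exactly balances the
empirical Gramians: given an SVD-type factorization `Y* X = U Σ V*` with `Σ` diagonal with
real, strictly positive, decreasing diagonal entries and `U* U = V* V = I`, setting
`Φ = X V Σ^{−1/2}` and `Ψ = Y U Σ^{−1/2}` one has `Ψ* Φ = I`, `Ψ* (X X*) Ψ = Σ`, and
`Φ* (Y Y*) Φ = Σ`; in particular, when `a = n`, `Φ` is invertible with inverse `Ψ*`. -/
theorem balanced_truncation_method_of_snapshots
    (n Nc No a : ℕ) (hn : 1 ≤ n) (hNc : 1 ≤ Nc) (hNo : 1 ≤ No) (ha : 1 ≤ a)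
    (X : Matrix (Fin n) (Fin Nc) ℂ) (Y : Matrix (Fin n) (Fin No) ℂ)
    (U : Matrix (Fin No) (Fin a) ℂ) (V : Matrix (Fin Nc) (Fin a) ℂ)
    (σ : Fin a → ℝ) (hσpos : ∀ k, 0 < σ k) (hσanti : Antitone σ)
    (hU : Uᴴ * U = 1) (hV : Vᴴ * V = 1)
    (hSVD : Yᴴ * X = U * Matrix.diagonal (fun k => (σ k : ℂ)) * Vᴴ)
    (S Sinvhalf : Matrix (Fin a) (Fin a) ℂ)
    (hS : S = Matrix.diagonal fun k => (σ k : ℂ))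
    (hSinvhalf : Sinvhalf = Matrix.diagonal fun k => ((Real.sqrt (σ k))⁻¹ : ℂ))
    (Φ Ψ : Matrix (Fin n) (Fin a) ℂ)
    (hΦ : Φ = X * V * Sinvhalf) (hΨ : Ψ = Y * U * Sinvhalf) :
    Ψᴴ * Φ = 1 ∧ Ψᴴ * (X * Xᴴ) * Ψ = S ∧ Φᴴ * (Y * Yᴴ) * Φ = S ∧
      (a = n → Φ * Ψᴴ = 1) := by
  have hDconj : (Matrix.diagonal fun k : Fin a => (σ k : ℂ))ᴴ
      = Matrix.diagonal fun k : Fin a => (σ k : ℂ) := by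
    rw [Matrix.diagonal_conjTranspose]
    refine congrArg Matrix.diagonal (funext fun k => ?_)
    simp [Pi.star_apply, Complex.star_def, Complex.conj_ofReal]
  have hDiconj : Sinvhalfᴴ = Sinvhalf := by
    rw [hSinvhalf, Matrix.diagonal_conjTranspose]
    refine congrArg Matrix.diagonal (funext fun k => ?_)
    simp [Pi.star_apply, Complex.star_def, map_inv₀, Complex.conj_ofReal]
  set D : Matrix (Fin a) (Fin a) ℂ := Matrix.diagonal fun k => (σ k : ℂ) with hD
  have hsq : ∀ k, (σ k : ℂ) = (Real.sqrt (σ k) : ℂ) * (Real.sqrt (σ k) : ℂ) := by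
    intro k
    norm_cast
    rw [Real.mul_self_sqrt (hσpos k).le]
  have hsne : ∀ k, ((Real.sqrt (σ k) : ℝ) : ℂ) ≠ 0 := by
    intro k
    exact_mod_cast (Real.sqrt_pos.mpr (hσpos k)).ne'
  have hDiD : Sinvhalf * D * Sinvhalf = 1 := by
    rw [hSinvhalf, hD, Matrix.diagonal_mul_diagonal, Matrix.diagonal_mul_diagonal,
      ← Matrix.diagonal_one]
    refine congrArg Matrix.diagonal (funext fun k => ?_)
    have := hsne k
    rw [hsq k]
    field_simp
  have hDDDi : Sinvhalf * (D * (D * Sinvhalf)) = D := by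
    rw [hSinvhalf, hD, Matrix.diagonal_mul_diagonal, Matrix.diagonal_mul_diagonal,
      Matrix.diagonal_mul_diagonal]
    refine congrArg Matrix.diagonal (funext fun k => ?_)
    have := hsne k
    rw [hsq k]
    field_simp
  have hXY : Xᴴ * Y = V * D * Uᴴ := by
    have := congrArg Matrix.conjTranspose hSVD
    simpa [Matrix.conjTranspose_mul, hDconj, Matrix.mul_assoc] using this
  have key : Ψᴴ * Φ = 1 := by
    rw [hΨ, hΦ]
    simp only [Matrix.conjTranspose_mul, hDiconj, Matrix.mul_assoc]
    rw [← Matrix.mul_assoc Yᴴ X, hSVD]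
    simp only [Matrix.mul_assoc]
    rw [← Matrix.mul_assoc Uᴴ U, hU, Matrix.one_mul,
      ← Matrix.mul_assoc Vᴴ V, hV, Matrix.one_mul,
      ← Matrix.mul_assoc Sinvhalf D, hDiD]
  have key2 : Ψᴴ * (X * Xᴴ) * Ψ = S := by
    rw [hΨ]
    simp only [Matrix.conjTranspose_mul, hDiconj, Matrix.mul_assoc]
    rw [← Matrix.mul_assoc Yᴴ X, hSVD, ← Matrix.mul_assoc Xᴴ Y, hXY]
    simp only [Matrix.mul_assoc]
    rw [← Matrix.mul_assoc Uᴴ U, hU, Matrix.one_mul,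
      ← Matrix.mul_assoc Vᴴ V, hV, Matrix.one_mul,
      ← Matrix.mul_assoc Uᴴ U, hU, Matrix.one_mul, hDDDi, hS]
  have key3 : Φᴴ * (Y * Yᴴ) * Φ = S := by
    rw [hΦ]
    simp only [Matrix.conjTranspose_mul, hDiconj, Matrix.mul_assoc]
    rw [← Matrix.mul_assoc Xᴴ Y, hXY, ← Matrix.mul_assoc Yᴴ X, hSVD]
    simp only [Matrix.mul_assoc]
    rw [← Matrix.mul_assoc Vᴴ V, hV, Matrix.one_mul,
      ← Matrix.mul_assoc Uᴴ U, hU, Matrix.one_mul,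
      ← Matrix.mul_assoc Vᴴ V, hV, Matrix.one_mul, hDDDi, hS]
  refine ⟨key, key2, key3, ?_⟩
  intro h
  subst h
  exact mul_eq_one_comm.mp key
end
end

section
/- The controllability Gramian measures the minimum input energy needed to reach a state: assume W_c(j) is invertible and let x ∈ ℂ^n. Then the input sequence u(i) = B(i)* F(j,i+1)* W_c(j)^{−1} x for i ≤ j−1 is square-summable, steers the system from the zero state in the infinite past to the state x at time j (i.e., Σ_{i=−∞}^{j−1} F(j,i+1) B(i) u(i) = x), and has energy Σ_{i=−∞}^{j−1} ‖u(i)‖² = ⟨x, W_c(j)^{−1} x⟩; moreover every square-summable input sequence v with Σ_{i=−∞}^{j−1} F(j,i+1) B(i) v(i) = x satisfies Σ_{i=−∞}^{j−1} ‖v(i)‖² ≥ ⟨x, W_c(j)^{−1} x⟩. -/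
open scoped Matrix

noncomputable section

open scoped Matrix.Norms.L2Operator

namespace CGMEAux

open Filter

/-! ### Auxiliary lemmas -/

section SpecRad

lemma summable_norm_pow_of_specRad_lt_one {𝒜 : Type*} [NormedRing 𝒜] [NormedAlgebra ℂ 𝒜]
    [CompleteSpace 𝒜] (a : 𝒜) (h : spectralRadius ℂ a < 1) :
    Summable fun m : ℕ => ‖a ^ m‖ := by
  obtain ⟨r, hr1, hr2⟩ := ENNReal.lt_iff_exists_nnreal_btwn.mp h
  have hGel := spectrum.pow_nnnorm_pow_one_div_tendsto_nhds_spectralRadius a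
  have hev : ∀ᶠ m : ℕ in atTop, (‖a ^ m‖₊ : ENNReal) ^ (1 / (m : ℝ)) < (r : ENNReal) :=
    hGel.eventually_lt_const hr1
  have hev2 : ∀ᶠ m : ℕ in atTop, ‖a ^ m‖ ≤ (r : ℝ) ^ m := by
    filter_upwards [hev, eventually_ge_atTop 1] with m hm hm1
    have hmne : (m : ℝ) ≠ 0 := by positivity
    have := ENNReal.rpow_le_rpow hm.le (by positivity : (0:ℝ) ≤ (m:ℝ))
    rw [← ENNReal.rpow_mul, one_div, inv_mul_cancel₀ hmne, ENNReal.rpow_one] at this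
    have : ‖a ^ m‖₊ ≤ r ^ m := by
      have h2 := this
      rw [ENNReal.rpow_natCast] at h2
      exact_mod_cast h2
    calc ‖a ^ m‖ = ((‖a ^ m‖₊ : ℝ)) := rfl
      _ ≤ ((r ^ m : NNReal) : ℝ) := by exact_mod_cast this
      _ = (r : ℝ) ^ m := by push_cast; ring
  obtain ⟨N, hN⟩ := eventually_atTop.mp hev2
  rw [← summable_nat_add_iff N]
  have hgeo : Summable fun m : ℕ => (r : ℝ) ^ (m + N) := by
    simpa [pow_add] using (summable_geometric_of_lt_one r.2 (by exact_mod_cast hr2)).mul_right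
      ((r : ℝ) ^ N)
  exact hgeo.of_nonneg_of_le (fun m => norm_nonneg _) (fun m => hN _ (by omega))

lemma summable_div_comp {g : ℕ → ℝ} (hg : Summable g) (hg0 : ∀ m, 0 ≤ g m)
    (T : ℕ) (hT : T ≠ 0) : Summable fun k : ℕ => g (k / T) := by
  haveI : NeZero T := ⟨hT⟩
  have heq : (fun k : ℕ => g (k / T)) = (fun qq : ℕ × Fin T => g qq.1) ∘ (Nat.divModEquiv T) :=
    rfl
  rw [heq, (Nat.divModEquiv T).summable_iff]
  refine (summable_prod_of_nonneg (fun qq => hg0 _)).mpr ⟨fun m => ?_, ?_⟩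
  · exact .of_finite
  · have h1 : ∀ m : ℕ, ∑' _ : Fin T, g m = (T : ℝ) * g m := by
      intro m
      rw [tsum_fintype]
      simp [Finset.sum_const, nsmul_eq_mul]
    simpa only [h1] using hg.mul_left (T : ℝ)

end SpecRad

section TransMat

variable {n T : ℕ} {A : ℤ → Matrix (Fin n) (Fin n) ℂ}

lemma transMatAux_add (A : ℤ → Matrix (Fin n) (Fin n) ℂ) (d e : ℕ) (i : ℤ) :
    transMatAux A (d + e) i = transMatAux A d (i + e) * transMatAux A e i := by
  induction d with
  | zero => simp [transMatAux]
  | succ d ih =>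
      have h1 : d + 1 + e = (d + e) + 1 := by ring
      have h2 : i + ((d + e : ℕ) : ℤ) = (i + e) + d := by push_cast; ring
      rw [h1]
      show A (i + ((d + e : ℕ) : ℤ)) * transMatAux A (d + e) i = _
      rw [h2, ih]
      show _ = A ((i + e) + d) * transMatAux A d (i + e) * transMatAux A e i
      rw [mul_assoc]

lemma transMatAux_period (hA : ∀ k : ℤ, A (k + T) = A k) (d : ℕ) (i : ℤ) :
    transMatAux A d (i - T) = transMatAux A d i := by
  induction d with
  | zero => rfl
  | succ d ih =>
      show A (i - T + d) * transMatAux A d (i - T) = A (i + d) * transMatAux A d i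
      rw [ih]
      have h := hA (i + d - T)
      rw [sub_add_cancel] at h
      rw [show i - (T:ℤ) + d = i + d - T from by ring, h]

lemma transMatAux_period_mul (hA : ∀ k : ℤ, A (k + T) = A k) (d m : ℕ) (i : ℤ) :
    transMatAux A d (i - m * T) = transMatAux A d i := by
  induction m with
  | zero => simp
  | succ m ih =>
      have h : i - ((m + 1 : ℕ) : ℤ) * T = (i - m * T) - T := by push_cast; ring
      rw [h, transMatAux_period hA, ih]

lemma stateTrans_nat (j : ℤ) (k : ℕ) : stateTrans A j (j - k) = transMatAux A k (j - k) := by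
  have h : (j - (j - (k:ℤ))).toNat = k := by omega
  rw [stateTrans, h]

lemma F_pow (hA : ∀ k : ℤ, A (k + T) = A k) (j : ℤ) (m : ℕ) :
    transMatAux A (m * T) (j - (m * T : ℕ)) = (transMatAux A T (j - T)) ^ m := by
  induction m with
  | zero => simp [transMatAux]
  | succ m ih =>
      have h1 : (m + 1) * T = m * T + T := by ring
      rw [h1, transMatAux_add]
      have h2 : j - ((m * T + T : ℕ) : ℤ) + (T : ℤ) = j - ((m * T : ℕ) : ℤ) := by
        push_cast; ring
      rw [h2, ih]
      have h3 : j - ((m * T + T : ℕ) : ℤ) = (j - T) - m * T := by push_cast; ring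
      rw [h3, transMatAux_period_mul hA, pow_succ]

lemma F_decomp (hA : ∀ k : ℤ, A (k + T) = A k) (j : ℤ) (m r : ℕ) :
    transMatAux A (m * T + r) (j - (m * T + r : ℕ)) =
      (transMatAux A T (j - T)) ^ m * transMatAux A r (j - r) := by
  rw [transMatAux_add]
  have h2 : j - ((m * T + r : ℕ) : ℤ) + (r : ℤ) = j - ((m * T : ℕ) : ℤ) := by push_cast; ring
  have h3 : j - ((m * T + r : ℕ) : ℤ) = (j - (r:ℤ)) - (m : ℤ) * (T : ℤ) := by push_cast; ring
  rw [h2, F_pow hA, h3, transMatAux_period_mul hA]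

end TransMat

section Dot

variable {p n : ℕ}

lemma dot_self_eq_sum_sq (w : Fin p → ℂ) :
    ((∑ i : Fin p, ‖w i‖ ^ 2 : ℝ) : ℂ) = star w ⬝ᵥ w := by
  rw [dotProduct]
  push_cast
  refine Finset.sum_congr rfl fun i _ => ?_
  rw [Pi.star_apply, ← Complex.conj_mul' (w i)]
  rfl

lemma dot_star_comm (a b : Fin p → ℂ) :
    star a ⬝ᵥ b = (starRingEnd ℂ) (star b ⬝ᵥ a) := by
  simp only [dotProduct, Pi.star_apply, map_sum, map_mul, Complex.conj_conj,
    RingHom.coe_coe]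
  exact Finset.sum_congr rfl fun i _ => by
    simp [mul_comm, Complex.star_def]

/-- mulVec by a fixed vector, as a continuous linear map in the matrix argument. -/
def mulVecCLM (a b : ℕ) (y : Fin a → ℂ) :
    Matrix (Fin b) (Fin a) ℂ →L[ℂ] (Fin b → ℂ) :=
  LinearMap.toContinuousLinearMap
    { toFun := fun M => M *ᵥ y
      map_add' := fun M N => Matrix.add_mulVec M N y
      map_smul' := fun c M => Matrix.smul_mulVec c M y }

@[simp] lemma mulVecCLM_apply (a b : ℕ) (y : Fin a → ℂ) (M : Matrix (Fin b) (Fin a) ℂ) :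
    mulVecCLM a b y M = M *ᵥ y := rfl

/-- dot product against a fixed vector, as a continuous linear map. -/
def dotCLM (a : ℕ) (y : Fin a → ℂ) : (Fin a → ℂ) →L[ℂ] ℂ :=
  LinearMap.toContinuousLinearMap
    { toFun := fun z => y ⬝ᵥ z
      map_add' := fun z w => dotProduct_add y z w
      map_smul' := fun c z => dotProduct_smul c y z }

@[simp] lemma dotCLM_apply (a : ℕ) (y z : Fin a → ℂ) : dotCLM a y z = y ⬝ᵥ z := rfl

end Dot

end CGMEAux

theorem controllability_gramian_minimum_energy
    (n p q T : ℕ) (hn : 1 ≤ n) (hp : 1 ≤ p) (hq : 1 ≤ q) (hT : 1 ≤ T)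
    (A : ℤ → Matrix (Fin n) (Fin n) ℂ) (B : ℤ → Matrix (Fin n) (Fin p) ℂ)
    (C : ℤ → Matrix (Fin q) (Fin n) ℂ)
    (hA : ∀ k : ℤ, A (k + T) = A k) (hB : ∀ k : ℤ, B (k + T) = B k)
    (hC : ∀ k : ℤ, C (k + T) = C k)
    (hstab : ∀ j : ℤ, spectralRadius ℂ (stateTrans A (j + T) j) < 1)
    (j : ℤ) (hinv : IsUnit (Wc A B j))
    (x : Fin n → ℂ) (u : ℕ → Fin p → ℂ)
    (hu : ∀ k : ℕ, u k = (B (j - 1 - k))ᴴ.mulVec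
      ((stateTrans A j (j - k))ᴴ.mulVec ((Wc A B j)⁻¹.mulVec x))) :
    Summable (fun k : ℕ => ∑ i : Fin p, ‖u k i‖ ^ 2) ∧
      HasSum (fun k : ℕ => (stateTrans A j (j - k)).mulVec ((B (j - 1 - k)).mulVec (u k))) x ∧
      ((∑' k : ℕ, ∑ i : Fin p, ‖u k i‖ ^ 2 : ℝ) : ℂ) = star x ⬝ᵥ (Wc A B j)⁻¹.mulVec x ∧
      ∀ v : ℕ → Fin p → ℂ,
        Summable (fun k : ℕ => ∑ i : Fin p, ‖v k i‖ ^ 2) →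
        HasSum (fun k : ℕ =>
          (stateTrans A j (j - k)).mulVec ((B (j - 1 - k)).mulVec (v k))) x →
        (∑' k : ℕ, ∑ i : Fin p, ‖u k i‖ ^ 2) ≤ ∑' k : ℕ, ∑ i : Fin p, ‖v k i‖ ^ 2 := by
  classical
  open CGMEAux in
  -- Notation
  set W : Matrix (Fin n) (Fin n) ℂ := Wc A B j with hW
  set y : Fin n → ℂ := W⁻¹ *ᵥ x with hy
  set G : ℕ → Matrix (Fin n) (Fin p) ℂ := fun k => stateTrans A j (j - k) * B (j - 1 - k)
    with hG
  set S : ℕ → Matrix (Fin n) (Fin n) ℂ := fun k => G k * (G k)ᴴ with hSdef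
  -- the matrix M and its spectral radius
  set M : Matrix (Fin n) (Fin n) ℂ := transMatAux A T (j - T) with hM
  have hMrad : spectralRadius ℂ M < 1 := by
    have h0 := hstab (j - T)
    have he : stateTrans A (j - T + T) (j - T) = M := by
      have h : ((j - T + T) - (j - T)).toNat = T := by omega
      rw [stateTrans, h]
    rwa [he] at h0
  -- summability of ‖M ^ m‖
  have hMsum : Summable fun m : ℕ => ‖M ^ m‖ :=
    CGMEAux.summable_norm_pow_of_specRad_lt_one M hMrad
  -- summability of ‖G k‖
  have hGnormsum : Summable fun k : ℕ => ‖G k‖ := by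
    set CF : ℝ := ∑ r ∈ Finset.range T, ‖transMatAux A r (j - r)‖ with hCF
    set CB : ℝ := ∑ r ∈ Finset.range T, ‖B (j - 1 - r)‖ with hCB
    have hdec : ∀ k : ℕ, stateTrans A j (j - k)
        = M ^ (k / T) * transMatAux A (k % T) (j - (k % T : ℕ)) := by
      intro k
      rw [CGMEAux.stateTrans_nat]
      conv_lhs => rw [← Nat.div_add_mod' k T]
      exact CGMEAux.F_decomp hA j (k / T) (k % T)
    have hBper : ∀ k : ℕ, B (j - 1 - k) = B (j - 1 - (k % T : ℕ)) := by
      intro k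
      have hper : Function.Periodic B (T : ℤ) := hB
      have h1 : j - 1 - (k : ℤ) = j - 1 - ((k % T : ℕ) : ℤ) - (k / T : ℕ) * (T : ℤ) := by
        have hh : (k:ℤ) = ((k / T : ℕ) : ℤ) * T + ((k % T : ℕ) : ℤ) := by
          exact_mod_cast (Nat.div_add_mod' k T).symm
        rw [hh]; ring
      rw [h1, hper.sub_nat_mul_eq]
    have hFb : ∀ k : ℕ, ‖transMatAux A (k % T) (j - (k % T : ℕ))‖ ≤ CF := by
      intro k
      refine Finset.single_le_sum (f := fun r => ‖transMatAux A r (j - r)‖)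
        (fun r _ => norm_nonneg _) ?_
      exact Finset.mem_range.mpr (Nat.mod_lt k (by omega))
    have hBb : ∀ k : ℕ, ‖B (j - 1 - k)‖ ≤ CB := by
      intro k
      rw [hBper k]
      refine Finset.single_le_sum (f := fun r => ‖B (j - 1 - (r : ℕ))‖)
        (fun r _ => norm_nonneg _) ?_
      exact Finset.mem_range.mpr (Nat.mod_lt k (by omega))
    have hGb : ∀ k : ℕ, ‖G k‖ ≤ ‖M ^ (k / T)‖ * (CF * CB) := by
      intro k
      have h1 : ‖G k‖ ≤ ‖stateTrans A j (j - k)‖ * ‖B (j - 1 - k)‖ :=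
        Matrix.l2_opNorm_mul _ _
      have h2 : ‖stateTrans A j (j - k)‖
          ≤ ‖M ^ (k / T)‖ * ‖transMatAux A (k % T) (j - (k % T : ℕ))‖ := by
        rw [hdec k]; exact Matrix.l2_opNorm_mul _ _
      calc ‖G k‖ ≤ ‖stateTrans A j (j - k)‖ * ‖B (j - 1 - k)‖ := h1
        _ ≤ (‖M ^ (k / T)‖ * ‖transMatAux A (k % T) (j - (k % T : ℕ))‖) * CB := by
            apply mul_le_mul h2 (hBb k) (norm_nonneg _)
            positivity
        _ ≤ ‖M ^ (k / T)‖ * (CF * CB) := by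
            rw [mul_assoc]
            apply mul_le_mul_of_nonneg_left _ (norm_nonneg _)
            apply mul_le_mul_of_nonneg_right (hFb k)
            have : (0:ℝ) ≤ ‖B (j - 1 - (0:ℕ))‖ := norm_nonneg _
            -- CB nonneg
            exact Finset.sum_nonneg fun r _ => norm_nonneg _
    have hsum2 : Summable fun k : ℕ => ‖M ^ (k / T)‖ * (CF * CB) :=
      (CGMEAux.summable_div_comp hMsum (fun m => norm_nonneg _) T (by omega)).mul_right _
    exact hsum2.of_nonneg_of_le (fun k => norm_nonneg _) hGb
  -- summability of the Gramian series
  have hGbd : ∀ k : ℕ, ‖G k‖ ≤ ∑' k, ‖G k‖ := fun k =>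
    Summable.le_tsum hGnormsum k (fun m _ => norm_nonneg _)
  have hSsum : Summable S := by
    refine Summable.of_norm_bounded (g := fun k => (∑' k, ‖G k‖) * ‖G k‖)
      (hGnormsum.mul_left _) fun k => ?_
    calc ‖S k‖ ≤ ‖G k‖ * ‖(G k)ᴴ‖ := Matrix.l2_opNorm_mul _ _
      _ = ‖G k‖ * ‖G k‖ := by rw [Matrix.l2_opNorm_conjTranspose]
      _ ≤ (∑' k, ‖G k‖) * ‖G k‖ :=
          mul_le_mul_of_nonneg_right (hGbd k) (norm_nonneg _)
  have hSW : HasSum S W := by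
    have : W = ∑' k, S k := by
      rw [hW, Wc]
      congr 1
      funext k
      rw [hSdef, hG]
      simp only [Matrix.conjTranspose_mul]
      rw [Matrix.mul_assoc]
    rw [this]
    exact hSsum.hasSum
  -- basic facts about W
  have hdet : IsUnit W.det := (Matrix.isUnit_iff_isUnit_det W).mp hinv
  have hWmul : W * W⁻¹ = 1 := Matrix.mul_nonsing_inv W hdet
  have hWherm : Wᴴ = W := by
    have h1 : HasSum (fun k => star (S k)) (star W) := hSW.star
    have h2 : ∀ k, star (S k) = S k := by
      intro k
      show (S k)ᴴ = S k
      rw [hSdef]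
      simp [Matrix.conjTranspose_mul]
    rw [funext h2] at h1
    exact (h1.unique hSW)
  have hWinvherm : (W⁻¹)ᴴ = W⁻¹ := by
    rw [Matrix.conjTranspose_nonsing_inv, hWherm]
  -- u k in terms of G
  have huG : ∀ k : ℕ, u k = (G k)ᴴ *ᵥ y := by
    intro k
    rw [hu k, Matrix.mulVec_mulVec, hG]
    simp [Matrix.conjTranspose_mul]
  -- the steering terms
  have hterm : ∀ (z : ℕ → Fin p → ℂ) (k : ℕ),
      (stateTrans A j (j - k)) *ᵥ ((B (j - 1 - k)) *ᵥ (z k)) = G k *ᵥ z k := by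
    intro z k
    rw [hG, Matrix.mulVec_mulVec]
  have hGu : ∀ k : ℕ, G k *ᵥ u k = S k *ᵥ y := by
    intro k
    rw [huG k, Matrix.mulVec_mulVec, hSdef]
  -- HasSum of S k *ᵥ y
  have hSy : HasSum (fun k => S k *ᵥ y) x := by
    have h1 := hSW.mapL (CGMEAux.mulVecCLM n n y)
    simp only [CGMEAux.mulVecCLM_apply] at h1
    have h2 : W *ᵥ y = x := by
      rw [hy, Matrix.mulVec_mulVec, hWmul, Matrix.one_mulVec]
    rwa [h2] at h1
  -- Part 2
  have part2 : HasSum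
      (fun k : ℕ => (stateTrans A j (j - k)).mulVec ((B (j - 1 - k)).mulVec (u k))) x := by
    have : (fun k : ℕ => (stateTrans A j (j - k)).mulVec ((B (j - 1 - k)).mulVec (u k)))
        = fun k => S k *ᵥ y := by
      funext k
      rw [hterm u k, hGu k]
    rw [this]
    exact hSy
  -- complex energies
  have hcE : ∀ k : ℕ, ((∑ i : Fin p, ‖u k i‖ ^ 2 : ℝ) : ℂ) = star y ⬝ᵥ (S k *ᵥ y) := by
    intro k
    rw [CGMEAux.dot_self_eq_sum_sq (u k)]
    rw [huG k, Matrix.star_mulVec, Matrix.conjTranspose_conjTranspose]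
    rw [← Matrix.dotProduct_mulVec, Matrix.mulVec_mulVec]
  -- HasSum of complex energies
  have hcsum : HasSum (fun k => star y ⬝ᵥ (S k *ᵥ y)) (star y ⬝ᵥ x) := by
    have h := hSy.mapL (CGMEAux.dotCLM n (star y))
    simpa using h
  have hEsum : HasSum (fun k : ℕ => ∑ i : Fin p, ‖u k i‖ ^ 2) ((star y ⬝ᵥ x).re) := by
    have h1 : HasSum (fun k => ((∑ i : Fin p, ‖u k i‖ ^ 2 : ℝ) : ℂ)) (star y ⬝ᵥ x) := by
      rw [funext hcE]; exact hcsum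
    have h2 := h1.mapL Complex.reCLM
    simp only [Complex.reCLM_apply, Complex.ofReal_re] at h2
    exact h2
  -- Part 3
  have hyx : star y ⬝ᵥ x = star x ⬝ᵥ (Wc A B j)⁻¹ *ᵥ x := by
    rw [hy, Matrix.star_mulVec, hWinvherm, ← Matrix.dotProduct_mulVec]
  have part3 : ((∑' k : ℕ, ∑ i : Fin p, ‖u k i‖ ^ 2 : ℝ) : ℂ)
      = star x ⬝ᵥ (Wc A B j)⁻¹.mulVec x := by
    have h1 : HasSum (fun k => ((∑ i : Fin p, ‖u k i‖ ^ 2 : ℝ) : ℂ)) (star y ⬝ᵥ x) := by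
      rw [funext hcE]; exact hcsum
    have h3 := (hEsum.summable.hasSum).mapL Complex.ofRealCLM
    simp only [Complex.ofRealCLM_apply] at h3
    rw [← hyx, ← h3.unique h1]
  refine ⟨hEsum.summable, part2, part3, ?_⟩
  -- Part 4: minimality
  intro v hvsum hvx
  set w : ℕ → Fin p → ℂ := fun k => v k - u k with hwdef
  have hvG : HasSum (fun k => G k *ᵥ v k) x := by
    rwa [funext (hterm v)] at hvx
  have huGsum : HasSum (fun k => G k *ᵥ u k) x := by
    have h := part2
    rwa [funext (hterm u)] at h
  have hwG : HasSum (fun k => G k *ᵥ w k) 0 := by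
    have h := hvG.sub huGsum
    simp only [hwdef, Matrix.mulVec_sub, sub_self] at h ⊢
    simpa using h
  have hcross : HasSum (fun k => star y ⬝ᵥ (G k *ᵥ w k)) 0 := by
    have h := hwG.mapL (CGMEAux.dotCLM n (star y))
    simpa using h
  have hcross_u : ∀ k, star (u k) ⬝ᵥ w k = star y ⬝ᵥ (G k *ᵥ w k) := by
    intro k
    rw [huG k, Matrix.star_mulVec, Matrix.conjTranspose_conjTranspose,
      ← Matrix.dotProduct_mulVec]
  have hcrossre : HasSum (fun k => (star (u k) ⬝ᵥ w k).re) 0 := by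
    have h := hcross.mapL Complex.reCLM
    simp only [Complex.reCLM_apply, Complex.zero_re] at h
    rwa [show (fun k => (star y ⬝ᵥ (G k *ᵥ w k)).re)
      = fun k => (star (u k) ⬝ᵥ w k).re from funext fun k => by rw [hcross_u k]] at h
  -- pointwise split of energies
  have hsq : ∀ a b : ℂ, ‖a + b‖ ^ 2 = ‖a‖ ^ 2 + ‖b‖ ^ 2 + 2 * ((starRingEnd ℂ) a * b).re := by
    intro a b
    simp only [Complex.sq_norm, Complex.normSq_apply, Complex.add_re,
      Complex.add_im, Complex.mul_re, Complex.conj_re, Complex.conj_im]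
    ring
  have hdotre : ∀ a b : Fin p → ℂ,
      (star a ⬝ᵥ b).re = ∑ i : Fin p, ((starRingEnd ℂ) (a i) * b i).re := by
    intro a b
    rw [dotProduct, Complex.re_sum]
    exact Finset.sum_congr rfl fun i _ => by rw [Pi.star_apply]; rfl
  have hEvsplit : ∀ k, (∑ i : Fin p, ‖v k i‖ ^ 2)
      = (∑ i : Fin p, ‖u k i‖ ^ 2) + (∑ i : Fin p, ‖w k i‖ ^ 2)
        + 2 * (star (u k) ⬝ᵥ w k).re := by
    intro k
    have hvk : ∀ i, v k i = u k i + w k i := by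
      intro i
      simp [hwdef]
    calc (∑ i : Fin p, ‖v k i‖ ^ 2) = ∑ i : Fin p, ‖u k i + w k i‖ ^ 2 := by
          exact Finset.sum_congr rfl fun i _ => by rw [hvk i]
      _ = ∑ i : Fin p, (‖u k i‖ ^ 2 + ‖w k i‖ ^ 2 + 2 * ((starRingEnd ℂ) (u k i) * w k i).re)
          := Finset.sum_congr rfl fun i _ => hsq _ _
      _ = (∑ i : Fin p, ‖u k i‖ ^ 2) + (∑ i : Fin p, ‖w k i‖ ^ 2)
            + 2 * (star (u k) ⬝ᵥ w k).re := by
          rw [Finset.sum_add_distrib, Finset.sum_add_distrib, hdotre, Finset.mul_sum]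
  -- summability of w-energies
  have hEw_le : ∀ k, (∑ i : Fin p, ‖w k i‖ ^ 2)
      ≤ 2 * (∑ i : Fin p, ‖u k i‖ ^ 2) + 2 * (∑ i : Fin p, ‖v k i‖ ^ 2) := by
    intro k
    have hbd : ∀ i : Fin p, ‖w k i‖ ^ 2 ≤ 2 * ‖u k i‖ ^ 2 + 2 * ‖v k i‖ ^ 2 := by
      intro i
      have h1 : ‖w k i‖ ≤ ‖v k i‖ + ‖u k i‖ := by
        simp only [hwdef]
        exact norm_sub_le _ _
      nlinarith [pow_le_pow_left₀ (norm_nonneg (w k i)) h1 2,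
        sq_nonneg (‖v k i‖ - ‖u k i‖), norm_nonneg (u k i), norm_nonneg (v k i)]
    calc (∑ i : Fin p, ‖w k i‖ ^ 2)
        ≤ ∑ i : Fin p, (2 * ‖u k i‖ ^ 2 + 2 * ‖v k i‖ ^ 2) := Finset.sum_le_sum fun i _ => hbd i
      _ = 2 * (∑ i : Fin p, ‖u k i‖ ^ 2) + 2 * (∑ i : Fin p, ‖v k i‖ ^ 2) := by
          rw [Finset.sum_add_distrib, Finset.mul_sum, Finset.mul_sum]
  have hEwsum : Summable fun k => ∑ i : Fin p, ‖w k i‖ ^ 2 :=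
    Summable.of_nonneg_of_le (fun k => Finset.sum_nonneg fun i _ => sq_nonneg _) hEw_le
      ((hEsum.summable.mul_left 2).add (hvsum.mul_left 2))
  -- combine
  have hcomb : HasSum (fun k => ∑ i : Fin p, ‖v k i‖ ^ 2)
      ((star y ⬝ᵥ x).re + (∑' k, ∑ i : Fin p, ‖w k i‖ ^ 2) + 2 * 0) := by
    have h := (hEsum.add hEwsum.hasSum).add (hcrossre.mul_left 2)
    rwa [show (fun k => ((∑ i : Fin p, ‖u k i‖ ^ 2) + (∑ i : Fin p, ‖w k i‖ ^ 2))
        + 2 * (star (u k) ⬝ᵥ w k).re) = fun k => ∑ i : Fin p, ‖v k i‖ ^ 2 from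
      funext fun k => by rw [hEvsplit k]] at h
  have h1 : (∑' k, ∑ i : Fin p, ‖v k i‖ ^ 2)
      = (star y ⬝ᵥ x).re + (∑' k, ∑ i : Fin p, ‖w k i‖ ^ 2) := by
    have := hcomb.tsum_eq
    simpa using this
  have h2 : (∑' k, ∑ i : Fin p, ‖u k i‖ ^ 2) = (star y ⬝ᵥ x).re := hEsum.tsum_eq
  have h3 : (0:ℝ) ≤ ∑' k, ∑ i : Fin p, ‖w k i‖ ^ 2 :=
    tsum_nonneg fun k => Finset.sum_nonneg fun i _ => sq_nonneg _
  linarith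
end
end

section
/- The empirical Gramians converge geometrically to the exact Gramians: for every integer j, W_ce(j;m) → W_c(j) and W_oe(j;m) → W_o(j) as m → ∞; moreover, for every real r with ρ(F(j+T,j))² < r < 1 there exists a constant M ≥ 0 such that ‖W_c(j) − W_ce(j; lT)‖ ≤ M r^l and ‖W_o(j) − W_oe(j; lT)‖ ≤ M r^l for all nonnegative integers l. -/
open scoped Matrix

noncomputable section

open scoped Matrix.Norms.L2Operator

section Helpers
open Filter

lemma summable_pow_div (r : ℝ) (T : ℕ) (hT : 0 < T) (h0 : 0 ≤ r) (h1 : r < 1) :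
    Summable (fun k : ℕ => r ^ (k / T)) := by
  have : NeZero T := ⟨hT.ne'⟩
  have h1s : Summable (fun l : ℕ => r ^ l) := summable_geometric_of_lt_one h0 h1
  have h2s : Summable (fun _ : Fin T => (1:ℝ)) := Summable.of_finite
  have hs : Summable (fun x : ℕ × Fin T => r ^ x.1 * (fun _ : Fin T => (1:ℝ)) x.2) :=
    h1s.mul_of_nonneg h2s (fun _ => by positivity) (fun _ => by norm_num)
  simp only [mul_one] at hs
  have := ((Nat.divModEquiv T).summable_iff (f := fun x : ℕ × Fin T => r ^ x.1)).mpr hs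
  exact this

lemma exists_pow_norm_le {E : Type*} [NormedRing E] [NormedAlgebra ℂ E] [CompleteSpace E]
    (a : E) {s : ℝ} (hs : spectralRadius ℂ a < ENNReal.ofReal s) :
    ∃ M : ℝ, 0 ≤ M ∧ ∀ l : ℕ, ‖a ^ l‖ ≤ M * s ^ l := by
  have hs0 : 0 < s := by
    by_contra h
    push_neg at h
    rw [ENNReal.ofReal_eq_zero.mpr h] at hs
    exact (not_lt_of_ge (zero_le (a := spectralRadius ℂ a))) hs
  have hgel := spectrum.pow_nnnorm_pow_one_div_tendsto_nhds_spectralRadius a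
  have hev : ∀ᶠ l : ℕ in atTop, (‖a ^ l‖₊ : ENNReal) ^ (1 / l : ℝ) < ENNReal.ofReal s :=
    hgel.eventually_lt_const hs
  obtain ⟨N, hN⟩ := (hev.and (eventually_ge_atTop 1)).exists_forall_of_atTop
  have key : ∀ l : ℕ, N ≤ l → ‖a ^ l‖ ≤ s ^ l := by
    intro l hl
    obtain ⟨h1, h2⟩ := hN l hl
    have hl0 : (0:ℝ) < (l : ℝ) := by exact_mod_cast h2
    have h3 : ((‖a ^ l‖₊ : ENNReal) ^ (1 / l : ℝ)) ^ (l : ℝ)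
        < (ENNReal.ofReal s) ^ (l : ℝ) := ENNReal.rpow_lt_rpow h1 hl0
    rw [← ENNReal.rpow_mul, one_div, inv_mul_cancel₀ hl0.ne', ENNReal.rpow_one,
      ENNReal.ofReal_rpow_of_pos hs0,
      show ((‖a ^ l‖₊ : ENNReal)) = ENNReal.ofReal ‖a ^ l‖ from (ofReal_norm _).symm] at h3
    have h5 := (ENNReal.ofReal_lt_ofReal_iff (by positivity)).mp h3
    rw [Real.rpow_natCast] at h5
    exact h5.le
  set S : ℝ := ∑ l ∈ Finset.range N, ‖a ^ l‖ / s ^ l with hS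
  have hS0 : 0 ≤ S := Finset.sum_nonneg fun l _ => by positivity
  refine ⟨S + 1, by linarith, fun l => ?_⟩
  rcases lt_or_ge l N with h | h
  · have hle : ‖a ^ l‖ / s ^ l ≤ S :=
      Finset.single_le_sum (f := fun l => ‖a ^ l‖ / s ^ l)
        (fun i _ => by positivity) (Finset.mem_range.mpr h)
    rw [div_le_iff₀ (by positivity)] at hle
    have : S * s ^ l ≤ (S + 1) * s ^ l := mul_le_mul_of_nonneg_right (by linarith) (by positivity)
    linarith
  · calc ‖a ^ l‖ ≤ s ^ l := key l h
    _ = 1 * s ^ l := (one_mul _).symm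
    _ ≤ (S + 1) * s ^ l := mul_le_mul_of_nonneg_right (by linarith) (by positivity)

namespace EG
variable {n : ℕ} (A : ℤ → Matrix (Fin n) (Fin n) ℂ) {T : ℕ}

lemma transMatAux_add (d e : ℕ) (i : ℤ) :
    transMatAux A (d + e) i = transMatAux A d (i + e) * transMatAux A e i := by
  induction d with
  | zero => simp [transMatAux]
  | succ d ih =>
      have h : d + 1 + e = (d + e) + 1 := by ring
      rw [h]
      show A (i + (d + e : ℕ)) * transMatAux A (d + e) i = _
      rw [ih]
      show _ = A (i + e + d) * transMatAux A d (i + e) * transMatAux A e i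
      rw [mul_assoc]
      congr 2
      push_cast
      ring

variable (hA : ∀ k : ℤ, A (k + T) = A k)
include hA

lemma transMatAux_shiftT (d : ℕ) (i : ℤ) :
    transMatAux A d (i + T) = transMatAux A d i := by
  induction d with
  | zero => rfl
  | succ d ih =>
      show A (i + T + d) * transMatAux A d (i + T) = A (i + d) * transMatAux A d i
      rw [ih]
      rw [← hA (i + d)]
      congr 2
      ring

lemma transMatAux_shift_nsmul (d l : ℕ) (i : ℤ) :
    transMatAux A d (i + l * T) = transMatAux A d i := by
  induction l with
  | zero => simp
  | succ l ih =>
      have h : i + ((l : ℤ) + 1) * T = (i + l * T) + T := by ring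
      push_cast
      rw [h, transMatAux_shiftT A hA, ih]

lemma transMatAux_sub_nsmul (d l : ℕ) (i : ℤ) :
    transMatAux A d (i - l * T) = transMatAux A d i := by
  have := transMatAux_shift_nsmul A hA d l (i - l * T)
  rw [sub_add_cancel] at this
  rw [← this]

lemma transMatAux_pow_right (l : ℕ) (j : ℤ) :
    transMatAux A (l * T) (j - (l * T : ℕ)) = (transMatAux A T (j - (T : ℕ))) ^ l := by
  induction l with
  | zero => simp [transMatAux]
  | succ l ih =>
      have e1 : (l + 1) * T = l * T + T := by ring
      rw [e1, transMatAux_add]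
      have e2 : j - ((l * T + T : ℕ) : ℤ) + (T : ℤ) = j - ((l * T : ℕ) : ℤ) := by
        push_cast; ring
      have e3 : j - ((l * T + T : ℕ) : ℤ) = (j - (T : ℕ)) - (l : ℤ) * (T : ℤ) := by
        push_cast; ring
      rw [e2, ih, e3, transMatAux_sub_nsmul A hA, pow_succ]

lemma transMatAux_pow_left (l : ℕ) (j : ℤ) :
    transMatAux A (l * T) j = (transMatAux A T j) ^ l := by
  induction l with
  | zero => simp [transMatAux]
  | succ l ih =>
      have e1 : (l + 1) * T = l * T + T := by ring
      rw [e1, transMatAux_add, transMatAux_shiftT A hA, ih, pow_succ]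

lemma transMatAux_T_sub (j : ℤ) :
    transMatAux A T (j - (T : ℕ)) = transMatAux A T j := by
  have := transMatAux_shiftT A hA T (j - (T : ℕ))
  rw [sub_add_cancel] at this
  exact this.symm

lemma stateTrans_decomp_c (j : ℤ) (l s : ℕ) :
    stateTrans A j (j - (l * T + s : ℕ)) =
      (transMatAux A T j) ^ l * transMatAux A s (j - (s : ℕ)) := by
  have h0 : stateTrans A j (j - (l * T + s : ℕ))
      = transMatAux A (l * T + s) (j - (l * T + s : ℕ)) := by
    unfold stateTrans
    rw [show j - (j - ((l * T + s : ℕ) : ℤ)) = ((l * T + s : ℕ) : ℤ) by ring,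
      Int.toNat_natCast]
  rw [h0, transMatAux_add]
  have e2 : j - ((l * T + s : ℕ) : ℤ) + ((s : ℕ) : ℤ) = j - ((l * T : ℕ) : ℤ) := by
    push_cast; ring
  have e3 : j - ((l * T + s : ℕ) : ℤ) = (j - ((s : ℕ) : ℤ)) - (l : ℤ) * (T : ℤ) := by
    push_cast; ring
  rw [e2, transMatAux_pow_right A hA, transMatAux_T_sub A hA, e3,
    transMatAux_sub_nsmul A hA]

lemma stateTrans_decomp_o (j : ℤ) (l s : ℕ) :
    stateTrans A (j + (s + l * T : ℕ)) j =
      transMatAux A s j * (transMatAux A T j) ^ l := by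
  have h0 : stateTrans A (j + (s + l * T : ℕ)) j
      = transMatAux A (s + l * T) j := by
    unfold stateTrans
    rw [show j + ((s + l * T : ℕ) : ℤ) - j = ((s + l * T : ℕ) : ℤ) by ring,
      Int.toNat_natCast]
  rw [h0, transMatAux_add]
  have e2 : j + ((l * T : ℕ) : ℤ) = j + (l : ℤ) * (T : ℤ) := by push_cast; ring
  rw [e2, transMatAux_shift_nsmul A hA, transMatAux_pow_left A hA]

omit hA in
/-- Periodic functions are invariant under subtracting multiples of the period. -/
lemma periodic_sub {X : Type*} (g : ℤ → X) (hg : ∀ m : ℤ, g (m + T) = g m) (l : ℕ) (m : ℤ) :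
    g (m - l * T) = g m := by
  induction l with
  | zero => simp
  | succ l ih =>
      have h : m - ((l : ℤ) + 1) * T + T = m - l * T := by ring
      have := hg (m - ((l : ℤ) + 1) * T)
      rw [h] at this
      push_cast
      rw [← ih, ← this]

omit hA in
lemma periodic_add {X : Type*} (g : ℤ → X) (hg : ∀ m : ℤ, g (m + T) = g m) (l : ℕ) (m : ℤ) :
    g (m + l * T) = g m := by
  have := periodic_sub (T := T) g hg l (m + l * T)
  rw [add_sub_cancel_right] at this
  rw [← this]

end EG

end Helpers

set_option maxHeartbeats 2000000 in
lemma key {n p q T : ℕ} (hT : 1 ≤ T)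
    (A : ℤ → Matrix (Fin n) (Fin n) ℂ) (B : ℤ → Matrix (Fin n) (Fin p) ℂ)
    (C : ℤ → Matrix (Fin q) (Fin n) ℂ)
    (hA : ∀ k : ℤ, A (k + T) = A k) (hB : ∀ k : ℤ, B (k + T) = B k)
    (hC : ∀ k : ℤ, C (k + T) = C k)
    (j : ℤ) (hstab : spectralRadius ℂ (stateTrans A (j + T) j) < 1)
    {r : ℝ} (hr1 : (spectralRadius ℂ (stateTrans A (j + T) j)).toReal ^ 2 < r) (hr2 : r < 1) :
    ∃ K : ℝ, 0 ≤ K ∧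
      (∀ k : ℕ, ‖stateTrans A j (j - k) * B (j - 1 - k) * (B (j - 1 - k))ᴴ *
          (stateTrans A j (j - k))ᴴ‖ ≤ K * r ^ (k / T)) ∧
      (∀ k : ℕ, ‖(stateTrans A (j + k) j)ᴴ * (C (j + k))ᴴ * C (j + k) *
          stateTrans A (j + k) j‖ ≤ K * r ^ (k / T)) := by
  have hT0 : 0 < T := hT
  have hΨeq : stateTrans A (j + T) j = transMatAux A T j := by
    unfold stateTrans
    rw [show j + (T : ℤ) - j = ((T : ℕ) : ℤ) by push_cast; ring, Int.toNat_natCast]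
  obtain ⟨Ψ, hΨ'⟩ : ∃ X, X = transMatAux A T j := ⟨_, rfl⟩
  rw [hΨeq, ← hΨ'] at hstab hr1
  have hρtop : spectralRadius ℂ Ψ ≠ ⊤ := hstab.ne_top
  have hr0 : 0 < r := lt_of_le_of_lt (by positivity) hr1
  obtain ⟨s, hs'⟩ : ∃ x : ℝ, x = Real.sqrt r := ⟨_, rfl⟩
  have hs0 : 0 < s := hs' ▸ Real.sqrt_pos.mpr hr0
  have hsr : s ^ 2 = r := hs' ▸ Real.sq_sqrt hr0.le
  have hρs : (spectralRadius ℂ Ψ).toReal < s := by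
    have h2 : (spectralRadius ℂ Ψ).toReal ^ 2 < s ^ 2 := by rw [hsr]; exact hr1
    exact lt_of_pow_lt_pow_left₀ 2 hs0.le h2
  have hlt : spectralRadius ℂ Ψ < ENNReal.ofReal s :=
    (ENNReal.lt_ofReal_iff_toReal_lt hρtop).mpr hρs
  obtain ⟨M₀, hM₀0, hM₀⟩ := exists_pow_norm_le Ψ hlt
  obtain ⟨cc, hcc⟩ : ∃ x : ℝ, x = ∑ u ∈ Finset.range T, ‖transMatAux A u (j - (u : ℕ))‖ :=
    ⟨_, rfl⟩
  obtain ⟨co, hco⟩ : ∃ x : ℝ, x = ∑ u ∈ Finset.range T, ‖transMatAux A u j‖ := ⟨_, rfl⟩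
  obtain ⟨bB, hbB⟩ : ∃ x : ℝ, x = ∑ u ∈ Finset.range T, ‖B (j - 1 - (u : ℕ))‖ := ⟨_, rfl⟩
  obtain ⟨bC, hbC⟩ : ∃ x : ℝ, x = ∑ u ∈ Finset.range T, ‖C (j + (u : ℕ))‖ := ⟨_, rfl⟩
  have hcc0 : 0 ≤ cc := hcc ▸ Finset.sum_nonneg fun _ _ => norm_nonneg _
  have hco0 : 0 ≤ co := hco ▸ Finset.sum_nonneg fun _ _ => norm_nonneg _
  have hbB0 : 0 ≤ bB := hbB ▸ Finset.sum_nonneg fun _ _ => norm_nonneg _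
  have hbC0 : 0 ≤ bC := hbC ▸ Finset.sum_nonneg fun _ _ => norm_nonneg _
  have hss : ∀ l : ℕ, s ^ l * s ^ l = r ^ l := fun l => by
    rw [← pow_add, ← two_mul, pow_mul, hsr]
  have hcast : ∀ k : ℕ, ((k % T : ℕ) : ℤ) + ((k / T : ℕ) : ℤ) * ((T : ℕ) : ℤ) = (k : ℤ) :=
    fun k => by exact_mod_cast Nat.mod_add_div' k T
  refine ⟨M₀ ^ 2 * (cc + co) ^ 2 * (bB + bC) ^ 2, by positivity, fun k => ?_, fun k => ?_⟩
  · -- controllability bound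
    have hdec := EG.stateTrans_decomp_c A hA j (k / T) (k % T)
    rw [Nat.div_add_mod' k T, ← hΨ'] at hdec
    have hRle : ‖transMatAux A (k % T) (j - ((k % T : ℕ) : ℤ))‖ ≤ cc := hcc ▸
      Finset.single_le_sum (f := fun u => ‖transMatAux A u (j - (u : ℕ))‖)
        (fun i _ => norm_nonneg _) (Finset.mem_range.mpr (Nat.mod_lt k hT0))
    have hFb : ‖stateTrans A j (j - (k : ℤ))‖ ≤ M₀ * s ^ (k / T) * cc := by
      rw [hdec]
      calc ‖Ψ ^ (k / T) * transMatAux A (k % T) (j - ((k % T : ℕ) : ℤ))‖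
          ≤ ‖Ψ ^ (k / T)‖ * ‖transMatAux A (k % T) (j - ((k % T : ℕ) : ℤ))‖ :=
            Matrix.l2_opNorm_mul _ _
        _ ≤ (M₀ * s ^ (k / T)) * cc :=
            mul_le_mul (hM₀ _) hRle (norm_nonneg _) (by positivity)
    have hBb : ‖B (j - 1 - (k : ℤ))‖ ≤ bB := by
      have hper := EG.periodic_sub (T := T) B hB (k / T) (j - 1 - ((k % T : ℕ) : ℤ))
      have harg : j - 1 - (k : ℤ) = j - 1 - ((k % T : ℕ) : ℤ) - ((k / T : ℕ) : ℤ) * ((T : ℕ) : ℤ) := by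
        have := hcast k; linarith
      rw [harg, hper, hbB]
      exact Finset.single_le_sum (f := fun u => ‖B (j - 1 - (u : ℕ))‖)
        (fun i _ => norm_nonneg _) (Finset.mem_range.mpr (Nat.mod_lt k hT0))
    have norm4 : ‖stateTrans A j (j - (k : ℤ)) * B (j - 1 - (k : ℤ)) * (B (j - 1 - (k : ℤ)))ᴴ *
        (stateTrans A j (j - (k : ℤ)))ᴴ‖ ≤
        ‖stateTrans A j (j - (k : ℤ))‖ * ‖B (j - 1 - (k : ℤ))‖ * ‖B (j - 1 - (k : ℤ))‖ *
        ‖stateTrans A j (j - (k : ℤ))‖ := by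
      calc ‖stateTrans A j (j - (k : ℤ)) * B (j - 1 - (k : ℤ)) * (B (j - 1 - (k : ℤ)))ᴴ *
          (stateTrans A j (j - (k : ℤ)))ᴴ‖
          ≤ ‖stateTrans A j (j - (k : ℤ)) * B (j - 1 - (k : ℤ)) * (B (j - 1 - (k : ℤ)))ᴴ‖ *
            ‖(stateTrans A j (j - (k : ℤ)))ᴴ‖ := Matrix.l2_opNorm_mul _ _
        _ ≤ ‖stateTrans A j (j - (k : ℤ)) * B (j - 1 - (k : ℤ))‖ * ‖(B (j - 1 - (k : ℤ)))ᴴ‖ *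
            ‖(stateTrans A j (j - (k : ℤ)))ᴴ‖ :=
            mul_le_mul_of_nonneg_right (Matrix.l2_opNorm_mul _ _) (norm_nonneg _)
        _ ≤ ‖stateTrans A j (j - (k : ℤ))‖ * ‖B (j - 1 - (k : ℤ))‖ * ‖(B (j - 1 - (k : ℤ)))ᴴ‖ *
            ‖(stateTrans A j (j - (k : ℤ)))ᴴ‖ :=
            mul_le_mul_of_nonneg_right
              (mul_le_mul_of_nonneg_right (Matrix.l2_opNorm_mul _ _) (norm_nonneg _))
              (norm_nonneg _)
        _ = ‖stateTrans A j (j - (k : ℤ))‖ * ‖B (j - 1 - (k : ℤ))‖ * ‖B (j - 1 - (k : ℤ))‖ *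
            ‖stateTrans A j (j - (k : ℤ))‖ := by
            rw [Matrix.l2_opNorm_conjTranspose, Matrix.l2_opNorm_conjTranspose]
    refine norm4.trans ?_
    calc ‖stateTrans A j (j - (k : ℤ))‖ * ‖B (j - 1 - (k : ℤ))‖ * ‖B (j - 1 - (k : ℤ))‖ *
        ‖stateTrans A j (j - (k : ℤ))‖
        ≤ (M₀ * s ^ (k / T) * cc) * bB * bB * (M₀ * s ^ (k / T) * cc) := by
          gcongr <;> first | exact hFb | exact hBb | positivity
      _ = (M₀ ^ 2 * cc ^ 2 * bB ^ 2) * (s ^ (k / T) * s ^ (k / T)) := by ring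
      _ = (M₀ ^ 2 * cc ^ 2 * bB ^ 2) * r ^ (k / T) := by rw [hss]
      _ ≤ (M₀ ^ 2 * (cc + co) ^ 2 * (bB + bC) ^ 2) * r ^ (k / T) := by
          apply mul_le_mul_of_nonneg_right _ (by positivity)
          gcongr <;> linarith
  · -- observability bound
    have hdec := EG.stateTrans_decomp_o A hA j (k / T) (k % T)
    rw [Nat.mod_add_div' k T, ← hΨ'] at hdec
    have hRle : ‖transMatAux A (k % T) j‖ ≤ co := hco ▸
      Finset.single_le_sum (f := fun u => ‖transMatAux A u j‖)
        (fun i _ => norm_nonneg _) (Finset.mem_range.mpr (Nat.mod_lt k hT0))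
    have hFb : ‖stateTrans A (j + (k : ℤ)) j‖ ≤ co * (M₀ * s ^ (k / T)) := by
      rw [hdec]
      calc ‖transMatAux A (k % T) j * Ψ ^ (k / T)‖
          ≤ ‖transMatAux A (k % T) j‖ * ‖Ψ ^ (k / T)‖ := Matrix.l2_opNorm_mul _ _
        _ ≤ co * (M₀ * s ^ (k / T)) :=
            mul_le_mul hRle (hM₀ _) (norm_nonneg _) hco0
    have hCb : ‖C (j + (k : ℤ))‖ ≤ bC := by
      have hper := EG.periodic_add (T := T) C hC (k / T) (j + ((k % T : ℕ) : ℤ))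
      have harg : j + (k : ℤ) = j + ((k % T : ℕ) : ℤ) + ((k / T : ℕ) : ℤ) * ((T : ℕ) : ℤ) := by
        have := hcast k; linarith
      rw [harg, hper, hbC]
      exact Finset.single_le_sum (f := fun u => ‖C (j + (u : ℕ))‖)
        (fun i _ => norm_nonneg _) (Finset.mem_range.mpr (Nat.mod_lt k hT0))
    have norm4 : ‖(stateTrans A (j + (k : ℤ)) j)ᴴ * (C (j + (k : ℤ)))ᴴ * C (j + (k : ℤ)) *
        stateTrans A (j + (k : ℤ)) j‖ ≤
        ‖stateTrans A (j + (k : ℤ)) j‖ * ‖C (j + (k : ℤ))‖ * ‖C (j + (k : ℤ))‖ *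
        ‖stateTrans A (j + (k : ℤ)) j‖ := by
      calc ‖(stateTrans A (j + (k : ℤ)) j)ᴴ * (C (j + (k : ℤ)))ᴴ * C (j + (k : ℤ)) *
          stateTrans A (j + (k : ℤ)) j‖
          ≤ ‖(stateTrans A (j + (k : ℤ)) j)ᴴ * (C (j + (k : ℤ)))ᴴ * C (j + (k : ℤ))‖ *
            ‖stateTrans A (j + (k : ℤ)) j‖ := Matrix.l2_opNorm_mul _ _
        _ ≤ ‖(stateTrans A (j + (k : ℤ)) j)ᴴ * (C (j + (k : ℤ)))ᴴ‖ * ‖C (j + (k : ℤ))‖ *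
            ‖stateTrans A (j + (k : ℤ)) j‖ :=
            mul_le_mul_of_nonneg_right (Matrix.l2_opNorm_mul _ _) (norm_nonneg _)
        _ ≤ ‖(stateTrans A (j + (k : ℤ)) j)ᴴ‖ * ‖(C (j + (k : ℤ)))ᴴ‖ * ‖C (j + (k : ℤ))‖ *
            ‖stateTrans A (j + (k : ℤ)) j‖ :=
            mul_le_mul_of_nonneg_right
              (mul_le_mul_of_nonneg_right (Matrix.l2_opNorm_mul _ _) (norm_nonneg _))
              (norm_nonneg _)
        _ = ‖stateTrans A (j + (k : ℤ)) j‖ * ‖C (j + (k : ℤ))‖ * ‖C (j + (k : ℤ))‖ *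
            ‖stateTrans A (j + (k : ℤ)) j‖ := by
            rw [Matrix.l2_opNorm_conjTranspose, Matrix.l2_opNorm_conjTranspose]
    refine norm4.trans ?_
    calc ‖stateTrans A (j + (k : ℤ)) j‖ * ‖C (j + (k : ℤ))‖ * ‖C (j + (k : ℤ))‖ *
        ‖stateTrans A (j + (k : ℤ)) j‖
        ≤ (co * (M₀ * s ^ (k / T))) * bC * bC * (co * (M₀ * s ^ (k / T))) := by
          gcongr <;> first | exact hFb | exact hCb | positivity
      _ = (M₀ ^ 2 * co ^ 2 * bC ^ 2) * (s ^ (k / T) * s ^ (k / T)) := by ring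
      _ = (M₀ ^ 2 * co ^ 2 * bC ^ 2) * r ^ (k / T) := by rw [hss]
      _ ≤ (M₀ ^ 2 * (cc + co) ^ 2 * (bB + bC) ^ 2) * r ^ (k / T) := by
          apply mul_le_mul_of_nonneg_right _ (by positivity)
          gcongr <;> linarith



lemma tail_bound {E : Type*} [NormedAddCommGroup E] [CompleteSpace E]
    (f : ℕ → E) (g : ℕ → ℝ) (hfg : ∀ k, ‖f k‖ ≤ g k) (hg : Summable g) (m : ℕ) :
    ‖(∑' k : ℕ, f k) - ∑ k ∈ Finset.range m, f k‖ ≤ ∑' k : ℕ, g (k + m) := by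
  have hnf : Summable fun k => ‖f k‖ := hg.of_nonneg_of_le (fun _ => norm_nonneg _) hfg
  have hf : Summable f := hnf.of_norm
  have h := Summable.sum_add_tsum_nat_add (f := f) m hf
  rw [← h, add_sub_cancel_left]
  calc ‖∑' k : ℕ, f (k + m)‖ ≤ ∑' k : ℕ, ‖f (k + m)‖ :=
        norm_tsum_le_tsum_norm ((summable_nat_add_iff m).mpr hnf)
    _ ≤ ∑' k : ℕ, g (k + m) :=
        Summable.tsum_le_tsum (fun k => hfg _) ((summable_nat_add_iff m).mpr hnf)
          ((summable_nat_add_iff m).mpr hg)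

/-- The empirical Gramians converge geometrically to the exact Gramians:
`W_ce(j;m) → W_c(j)` and `W_oe(j;m) → W_o(j)` as `m → ∞`; moreover for every real `r` with
`ρ(F(j+T,j))² < r < 1` there is `M ≥ 0` with `‖W_c(j) − W_ce(j;lT)‖ ≤ M rˡ` and
`‖W_o(j) − W_oe(j;lT)‖ ≤ M rˡ` for all `l`, where `‖·‖` is the operator norm induced by
the Euclidean norm. -/
theorem empirical_gramians_converge_geometrically
    (n p q T : ℕ) (hn : 1 ≤ n) (hp : 1 ≤ p) (hq : 1 ≤ q) (hT : 1 ≤ T)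
    (A : ℤ → Matrix (Fin n) (Fin n) ℂ) (B : ℤ → Matrix (Fin n) (Fin p) ℂ)
    (C : ℤ → Matrix (Fin q) (Fin n) ℂ)
    (hA : ∀ k : ℤ, A (k + T) = A k) (hB : ∀ k : ℤ, B (k + T) = B k)
    (hC : ∀ k : ℤ, C (k + T) = C k)
    (hstab : ∀ j : ℤ, spectralRadius ℂ (stateTrans A (j + T) j) < 1)
    (j : ℤ) :
    Filter.Tendsto (fun m : ℕ => Wce A B j m) Filter.atTop (nhds (Wc A B j)) ∧
      Filter.Tendsto (fun m : ℕ => Woe A C j m) Filter.atTop (nhds (Wo A C j)) ∧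
      ∀ r : ℝ, (spectralRadius ℂ (stateTrans A (j + T) j)).toReal ^ 2 < r → r < 1 →
        ∃ M : ℝ, 0 ≤ M ∧ ∀ l : ℕ,
          ‖Wc A B j - Wce A B j (l * T)‖ ≤ M * r ^ l ∧
          ‖Wo A C j - Woe A C j (l * T)‖ ≤ M * r ^ l := by
  have hT0 : 0 < T := hT
  obtain ⟨ρt, hρt⟩ : ∃ x : ℝ, x = (spectralRadius ℂ (stateTrans A (j + T) j)).toReal := ⟨_, rfl⟩
  have hρt1 : ρt < 1 := by
    rw [hρt]
    refine ENNReal.toReal_lt_of_lt_ofReal ?_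
    simpa [ENNReal.ofReal_one] using hstab j
  have hρt0 : 0 ≤ ρt := hρt ▸ ENNReal.toReal_nonneg
  have hρsq1 : ρt ^ 2 < 1 := by nlinarith
  obtain ⟨K, hK0, hKc, hKo⟩ := key hT A B C hA hB hC j (hstab j)
    (r := (ρt ^ 2 + 1) / 2) (by rw [← hρt]; linarith) (by linarith)
  have hr00 : (0:ℝ) ≤ (ρt ^ 2 + 1) / 2 := by positivity
  have hr01 : (ρt ^ 2 + 1) / 2 < 1 := by linarith
  have hgeo : Summable (fun k : ℕ => K * ((ρt ^ 2 + 1) / 2) ^ (k / T)) :=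
    (summable_pow_div _ T hT0 hr00 hr01).mul_left K
  have hnc : Summable (fun k : ℕ => ‖stateTrans A j (j - k) * B (j - 1 - k) *
      (B (j - 1 - k))ᴴ * (stateTrans A j (j - k))ᴴ‖) :=
    Summable.of_nonneg_of_le (fun _ => norm_nonneg _) hKc hgeo
  have hsc : Summable (fun k : ℕ => stateTrans A j (j - k) * B (j - 1 - k) *
      (B (j - 1 - k))ᴴ * (stateTrans A j (j - k))ᴴ) := hnc.of_norm
  have hno : Summable (fun k : ℕ => ‖(stateTrans A (j + k) j)ᴴ * (C (j + k))ᴴ * C (j + k) *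
      stateTrans A (j + k) j‖) :=
    Summable.of_nonneg_of_le (fun _ => norm_nonneg _) hKo hgeo
  have hso : Summable (fun k : ℕ => (stateTrans A (j + k) j)ᴴ * (C (j + k))ᴴ * C (j + k) *
      stateTrans A (j + k) j) := hno.of_norm
  refine ⟨hsc.hasSum.tendsto_sum_nat, hso.hasSum.tendsto_sum_nat, ?_⟩
  intro r hr1 hr2
  obtain ⟨K', hK'0, hK'c, hK'o⟩ := key hT A B C hA hB hC j (hstab j) hr1 hr2
  have hr0 : (0:ℝ) ≤ r := le_trans (by positivity) hr1.le
  have hgeo' : Summable (fun k : ℕ => K' * r ^ (k / T)) :=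
    (summable_pow_div r T hT0 hr0 hr2).mul_left K'
  refine ⟨∑' k : ℕ, K' * r ^ (k / T), tsum_nonneg fun k => by positivity, fun l => ?_⟩
  have hb2 : (∑' k : ℕ, K' * r ^ ((k + l * T) / T))
      = (∑' k : ℕ, K' * r ^ (k / T)) * r ^ l := by
    rw [← tsum_mul_right]
    congr 1
    funext k
    rw [Nat.add_mul_div_right k l hT0, pow_add]
    ring
  constructor
  · have hb1 : ‖Wc A B j - Wce A B j (l * T)‖ ≤ ∑' k : ℕ, K' * r ^ ((k + l * T) / T) :=
      tail_bound (fun k : ℕ => stateTrans A j (j - k) * B (j - 1 - k) *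
        (B (j - 1 - k))ᴴ * (stateTrans A j (j - k))ᴴ)
        (fun k : ℕ => K' * r ^ (k / T)) hK'c hgeo' (l * T)
    exact hb1.trans_eq hb2
  · have hb1 : ‖Wo A C j - Woe A C j (l * T)‖ ≤ ∑' k : ℕ, K' * r ^ ((k + l * T) / T) :=
      tail_bound (fun k : ℕ => (stateTrans A (j + k) j)ᴴ * (C (j + k))ᴴ * C (j + k) *
        stateTrans A (j + k) j)
        (fun k : ℕ => K' * r ^ (k / T)) hK'o hgeo' (l * T)
    exact hb1.trans_eq hb2
end
end
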